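/- arXiv:2605.19625 — 11 statements merged into one kernel-verified Lean document; each statement's English description precedes it below -/
import Mathlib

section
/- Let {v_1,…,v_T} ⊂ S^{d-1} be an α-covering of the unit sphere in the angular metric, for 0 < α < π/2, i.e., for every unit vector v there exists v_i with ⟨v, v_i⟩ ≥ cos α. Suppose x, y ∈ ℝ^d and r_1,…,r_T ∈ ℝ satisfy |⟨x, v_i⟩ - r_i| ≤ δ and |⟨y, v_i⟩ - r_i| ≤ δ for all i. Then ‖x - y‖ ≤ 2δ/cos α. -/
open RealInnerProductSpace Real

/-!
Apply the covering to the unit vector in the direction of `x - y`: some `v i` makes inner product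
at least `cos α` with it, so `‖x - y‖ cos α ≤ ⟪x - y, v i⟫`, while both `⟪x, v i⟫` and `⟪y, v i⟫`
lie within `δ` of `r i`, so `⟪x - y, v i⟫ ≤ 2δ`.
-/

theorem norm_mul_le_of_cover_of_inner_le {E ι : Type*} [NormedAddCommGroup E]
    [InnerProductSpace ℝ E] {v : ι → E} {c ε : ℝ} (hε : 0 ≤ ε)
    (hcover : ∀ u : E, ‖u‖ = 1 → ∃ i, c ≤ ⟪u, v i⟫) {w : E} (hw : ∀ i, ⟪w, v i⟫ ≤ ε) :
    ‖w‖ * c ≤ ε := by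
  rcases eq_or_ne w 0 with rfl | hw0
  · simpa using hε
  obtain ⟨i, hi⟩ := hcover (‖w‖⁻¹ • w) (norm_smul_inv_norm hw0)
  calc ‖w‖ * c ≤ ‖w‖ * ⟪‖w‖⁻¹ • w, v i⟫ := mul_le_mul_of_nonneg_left hi (norm_nonneg w)
    _ = ⟪w, v i⟫ := by
      rw [real_inner_smul_left, mul_inv_cancel_left₀ (norm_ne_zero_iff.mpr hw0)]
    _ ≤ ε := hw i

theorem inner_sub_le_of_abs_inner_sub_le {E : Type*} [NormedAddCommGroup E]
    [InnerProductSpace ℝ E] {x y v : E} {r δ : ℝ}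
    (hx : |⟪x, v⟫ - r| ≤ δ) (hy : |⟪y, v⟫ - r| ≤ δ) : ⟪x - y, v⟫ ≤ 2 * δ := by
  rw [inner_sub_left]
  linarith [(abs_le.mp hx).2, (abs_le.mp hy).1]

theorem diam_from_angular_cover_general
    (d T : ℕ) (δ α : ℝ) (hδ : 0 < δ) (hα : 0 < α) (hα2 : α < π / 2)
    (v : Fin T → EuclideanSpace ℝ (Fin d))
    (hcover : ∀ u : EuclideanSpace ℝ (Fin d), ‖u‖ = 1 → ∃ i, Real.cos α ≤ ⟪u, v i⟫)
    (x y : EuclideanSpace ℝ (Fin d)) (r : Fin T → ℝ)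
    (hx : ∀ i, |⟪x, v i⟫ - r i| ≤ δ)
    (hy : ∀ i, |⟪y, v i⟫ - r i| ≤ δ) :
    ‖x - y‖ ≤ 2 * δ / Real.cos α := by
  have hcos : 0 < Real.cos α := Real.cos_pos_of_mem_Ioo ⟨by linarith [Real.pi_pos], hα2⟩
  rw [le_div_iff₀ hcos]
  exact norm_mul_le_of_cover_of_inner_le (by positivity) hcover
    fun i ↦ inner_sub_le_of_abs_inner_sub_le (hx i) (hy i)

theorem diam_from_angular_cover
    (d T : ℕ) (δ α : ℝ) (hδ : 0 < δ) (hα : 0 < α) (hα2 : α < π / 2)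
    (v : Fin T → EuclideanSpace ℝ (Fin d))
    (hunit : ∀ i, ‖v i‖ = 1)
    (hcover : ∀ u : EuclideanSpace ℝ (Fin d), ‖u‖ = 1 → ∃ i, Real.cos α ≤ ⟪u, v i⟫)
    (x y : EuclideanSpace ℝ (Fin d)) (r : Fin T → ℝ)
    (hx : ∀ i, |⟪x, v i⟫ - r i| ≤ δ)
    (hy : ∀ i, |⟪y, v i⟫ - r i| ≤ δ) :
    ‖x - y‖ ≤ 2 * δ / Real.cos α :=
  diam_from_angular_cover_general d T δ α hδ hα hα2 v hcover x y r hx hy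
end

section
/- Let Δ = {x_0,…,x_d} and Δ' = {y_0,…,y_d} be two regular simplices in ℝ^d with edge length 1. If the diameter of Δ ∪ Δ' equals 1, then Δ = Δ' as sets. -/
open Finset RealInnerProductSpace


private lemma sum_ite_const {n : ℕ} (k : Fin n) (A B : ℝ) :
    ∑ j, (if k = j then A else B) = A + ((n:ℝ) - 1) * B := by
  have h : ∀ j, (if k = j then A else B) = B + (if k = j then A - B else 0) := by
    intro j; split <;> ring
  simp only [h, Finset.sum_add_distrib, Finset.sum_const, Finset.card_univ,
    Fintype.card_fin, Finset.sum_ite_eq, Finset.mem_univ, if_true, nsmul_eq_mul]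
  ring

private lemma simplex_gram (d : ℕ) (z : Fin (d+1) → EuclideanSpace ℝ (Fin d))
    (hz : ∀ i j, i ≠ j → ‖z i - z j‖ = 1) (i j : Fin (d+1)) :
    ⟪z i - ((d:ℝ)+1)⁻¹ • (∑ k, z k), z j - ((d:ℝ)+1)⁻¹ • (∑ k, z k)⟫ =
      if i = j then (d:ℝ)/(2*((d:ℝ)+1)) else -(1/(2*((d:ℝ)+1))) := by
  have hD1 : (0:ℝ) < (d:ℝ) + 1 := by positivity
  set c : EuclideanSpace ℝ (Fin d) := ((d:ℝ)+1)⁻¹ • ∑ k, z k with hc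
  set e : Fin (d+1) → EuclideanSpace ℝ (Fin d) := fun i => z i - c with he
  have hesum : ∑ i, e i = 0 := by
    simp only [he, Finset.sum_sub_distrib, Finset.sum_const, Finset.card_univ,
      Fintype.card_fin, hc]
    rw [← Nat.cast_smul_eq_nsmul ℝ, smul_smul]
    push_cast
    rw [mul_inv_cancel₀ hD1.ne', one_smul, sub_self]
  have hsq : ∀ a b : Fin (d+1), ‖e a - e b‖^2 = if a = b then 0 else 1 := by
    intro a b
    have h2 : e a - e b = z a - z b := by simp [he]
    rw [h2]
    split
    · subst ‹a = b›; simp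
    · rw [hz a b ‹a ≠ b›]; norm_num
  set S : ℝ := ∑ k, ‖e k‖^2 with hS
  have hexp : ∀ a : Fin (d+1), ∑ b, ‖e a - e b‖^2 = ((d:ℝ)+1) * ‖e a‖^2 + S := by
    intro a
    rw [Finset.sum_congr rfl fun b _ => norm_sub_sq_real (e a) (e b)]
    rw [Finset.sum_add_distrib, Finset.sum_sub_distrib, Finset.sum_const, Finset.card_univ,
      Fintype.card_fin, ← Finset.mul_sum, ← inner_sum, hesum, inner_zero_right,
      nsmul_eq_mul]
    push_cast
    ring
  have hni : ∀ a : Fin (d+1), ((d:ℝ)+1) * ‖e a‖^2 + S = (d:ℝ) := by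
    intro a
    rw [← hexp a, Finset.sum_congr rfl fun b _ => hsq a b, sum_ite_const a 0 1]
    push_cast; ring
  have hShalf : S = (d:ℝ)/2 := by
    have h1 : ∑ a : Fin (d+1), (((d:ℝ)+1) * ‖e a‖^2 + S) = ((d:ℝ)+1) * (d:ℝ) := by
      rw [Finset.sum_congr rfl fun a _ => hni a, Finset.sum_const, Finset.card_univ,
        Fintype.card_fin, nsmul_eq_mul]
      push_cast; ring
    rw [Finset.sum_add_distrib, ← Finset.mul_sum, ← hS, Finset.sum_const, Finset.card_univ,
      Fintype.card_fin, nsmul_eq_mul] at h1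
    push_cast at h1
    nlinarith [hD1]
  have hnorm : ∀ a : Fin (d+1), ‖e a‖^2 = (d:ℝ)/(2*((d:ℝ)+1)) := by
    intro a
    have h3 := hni a
    rw [hShalf] at h3
    field_simp
    linarith
  by_cases hij : i = j
  · subst hij
    simp only [if_pos rfl]
    show ⟪e i, e i⟫ = _
    rw [real_inner_self_eq_norm_sq]
    exact hnorm i
  · simp only [if_neg hij]
    show ⟪e i, e j⟫ = _
    have h1 : ‖e i - e j‖^2 = 1 := by rw [hsq i j]; simp [hij]
    rw [norm_sub_sq_real, hnorm i, hnorm j] at h1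
    set t := ⟪e i, e j⟫ with ht
    field_simp at h1 ⊢
    linarith



private lemma gram_sum_zero (d : ℕ) (e : Fin (d+1) → EuclideanSpace ℝ (Fin d))
    (h : ∀ i j, ⟪e i, e j⟫ = if i = j then (d:ℝ)/(2*((d:ℝ)+1)) else -(1/(2*((d:ℝ)+1)))) :
    ∑ i, e i = 0 := by
  have hD1 : (0:ℝ) < (d:ℝ) + 1 := by positivity
  have h0 : ⟪∑ i, e i, ∑ j, e j⟫ = 0 := by
    rw [sum_inner]
    rw [Finset.sum_congr rfl fun i _ => inner_sum Finset.univ e (e i)]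
    have hrow : ∀ i : Fin (d+1), ∑ j, ⟪e i, e j⟫ = 0 := by
      intro i
      rw [Finset.sum_congr rfl fun j _ => h i j, sum_ite_const i _ _]
      push_cast
      field_simp
      ring
    rw [Finset.sum_congr rfl fun i _ => hrow i, Finset.sum_const]
    simp
  exact inner_self_eq_zero.mp h0

private lemma frame_identity (d : ℕ) (e : Fin (d+1) → EuclideanSpace ℝ (Fin d))
    (h : ∀ i j, ⟪e i, e j⟫ = if i = j then (d:ℝ)/(2*((d:ℝ)+1)) else -(1/(2*((d:ℝ)+1))))
    (w : EuclideanSpace ℝ (Fin d)) :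
    ∑ i, ⟪e i, w⟫^2 = ‖w‖^2/2 := by
  have hD1 : (0:ℝ) < (d:ℝ) + 1 := by positivity
  have hesum : ∑ i, e i = 0 := gram_sum_zero d e h
  -- linear independence of differences
  set g : Fin d → EuclideanSpace ℝ (Fin d) := fun i => e i.succ - e 0 with hg
  have hgram : ∀ i j : Fin d, ⟪g i, g j⟫ = if i = j then 1 else 1/2 := by
    intro i j
    simp only [hg, inner_sub_left, inner_sub_right]
    rw [h, h, h, h]
    simp only [Fin.succ_inj, (Fin.succ_ne_zero i), (Fin.succ_ne_zero j),
      (Fin.succ_ne_zero j).symm, if_neg, if_pos rfl]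
    norm_num
    split <;> (field_simp; ring)
  have hli : LinearIndependent ℝ g := by
    rw [Fintype.linearIndependent_iff]
    intro cc hcc
    have h0 : ⟪∑ i, cc i • g i, ∑ j, cc j • g j⟫ = 0 := by rw [hcc]; simp
    rw [sum_inner] at h0
    have hrow : ∀ i : Fin d, ⟪cc i • g i, ∑ j, cc j • g j⟫
        = cc i * (cc i/2) + cc i * ((∑ j, cc j)/2) := by
      intro i
      rw [real_inner_smul_left, inner_sum]
      rw [Finset.sum_congr rfl fun j _ => by
        rw [real_inner_smul_right, hgram i j]]
      have hsplit : ∀ j : Fin d, cc j * (if i = j then (1:ℝ) else 1/2)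
          = cc j / 2 + (if i = j then cc j / 2 else 0) := by
        intro j; split <;> ring
      rw [Finset.sum_congr rfl fun j _ => hsplit j, Finset.sum_add_distrib,
        Finset.sum_ite_eq Finset.univ i (fun j => cc j / 2)]
      simp [Finset.sum_div]
      ring
    rw [Finset.sum_congr rfl fun i _ => hrow i, Finset.sum_add_distrib] at h0
    have h1 : ∑ i, cc i * (cc i / 2) + (∑ i, cc i) * ((∑ i, cc i)/2) = 0 := by
      rw [← h0]; congr 1
      rw [Finset.sum_mul]
    have h2 : ∑ i, (cc i)^2 = 0 := by
      have hnn : (0:ℝ) ≤ (∑ i, cc i) * ((∑ i, cc i)/2) := by nlinarith [sq_nonneg (∑ i, cc i)]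
      have : ∑ i, cc i * (cc i / 2) = (∑ i, (cc i)^2)/2 := by
        rw [Finset.sum_div]; exact Finset.sum_congr rfl fun i _ => by ring
      nlinarith [Finset.sum_nonneg (fun i (_ : i ∈ Finset.univ) => sq_nonneg (cc i))]
    intro i
    have h4 := (Finset.sum_eq_zero_iff_of_nonneg
      (fun i (_ : i ∈ Finset.univ) => sq_nonneg (cc i))).mp h2 i (Finset.mem_univ i)
    exact (pow_eq_zero_iff (n := 2) (by norm_num)).mp h4
  have hspan : Submodule.span ℝ (Set.range e) = ⊤ := by
    have hcard : Fintype.card (Fin d) = Module.finrank ℝ (EuclideanSpace ℝ (Fin d)) := by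
      simp [finrank_euclideanSpace_fin]
    have htop := hli.span_eq_top_of_card_eq_finrank' hcard
    refine top_unique ?_
    rw [← htop]
    refine Submodule.span_le.mpr ?_
    rintro _ ⟨i, rfl⟩
    exact Submodule.sub_mem _ (Submodule.subset_span ⟨_, rfl⟩)
      (Submodule.subset_span ⟨_, rfl⟩)
  have hrepr : ∀ v : EuclideanSpace ℝ (Fin d), ∑ i, ⟪e i, v⟫ • e i = (2⁻¹:ℝ) • v := by
    intro v
    have hv : v ∈ Submodule.span ℝ (Set.range e) := hspan ▸ Submodule.mem_top
    induction hv using Submodule.span_induction with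
    | mem u hu =>
      obtain ⟨k, rfl⟩ := hu
      rw [Finset.sum_congr rfl fun i _ => by rw [h i k]]
      have hsplit : ∀ i : Fin (d+1), (if i = k then (d:ℝ)/(2*((d:ℝ)+1)) else -(1/(2*((d:ℝ)+1)))) • e i
          = (-(1/(2*((d:ℝ)+1)))) • e i + (if i = k then ((2:ℝ)⁻¹) • e i else 0) := by
        intro i
        split
        · subst ‹i = k›
          rw [← add_smul]
          congr 1
          field_simp
          ring
        · simp
      rw [Finset.sum_congr rfl fun i _ => hsplit i, Finset.sum_add_distrib,
        ← Finset.smul_sum, hesum, smul_zero, zero_add,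
        Finset.sum_ite_eq' Finset.univ k (fun i => ((2:ℝ)⁻¹) • e i)]
      simp
    | zero => simp
    | add u v hu hv ihu ihv =>
      rw [smul_add, ← ihu, ← ihv, ← Finset.sum_add_distrib]
      exact Finset.sum_congr rfl fun i _ => by rw [inner_add_right, add_smul]
    | smul a u hu ihu =>
      rw [smul_comm, ← ihu, Finset.smul_sum]
      exact Finset.sum_congr rfl fun i _ => by
        rw [real_inner_smul_right, mul_smul]
  calc ∑ i, ⟪e i, w⟫^2 = ∑ i, ⟪⟪e i, w⟫ • e i, w⟫ := by
        exact Finset.sum_congr rfl fun i _ => by rw [real_inner_smul_left]; ring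
    _ = ⟪∑ i, ⟪e i, w⟫ • e i, w⟫ := by rw [sum_inner]
    _ = ⟪(2⁻¹:ℝ) • w, w⟫ := by rw [hrepr w]
    _ = ‖w‖^2/2 := by
        rw [real_inner_smul_left, real_inner_self_eq_norm_sq]; ring

private lemma arith0 (t : ℝ) (h0 : 0 ≤ t) (h1 : t ≤ 1) : 0 ≤ (1 - t^2)/2 := by nlinarith

private lemma arith1 (D s b : ℝ) (hD0 : 0 ≤ D) (hD1 : 0 < D+1)
    (hs : 2*(D+1)*s = 1) (hk0 : 0 ≤ s - b)
    (hQA : (D*s + 2*b)/2 + (D+1)*(s-b)^2 ≤ ((D+1)*(s-b))^2) : b ≤ 0 := by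
  have hq1 : D*(D+1)*(s-b)^2 ≥ (D*s + 2*b)/2 := by nlinarith [hQA]
  have e1 : D*(D+1)*s^2 = D*s/2 := by linear_combination (D*s/2) * hs
  have e3 : 2*(D+1)*s*(D*b) = D*b := by rw [hs]; ring
  have hq2' : D*(D+1)*b^2 ≥ (D+1)*b := by nlinarith [hq1, e1, e3]
  have hq2 : D*b^2 ≥ b := by nlinarith [hq2', hD1]
  have hDs1 : D*s < 1 := by nlinarith [hs, hD1, mul_pos hD1 hD1]
  by_contra hpos
  push_neg at hpos
  have p1 : D*(s - b)*b ≥ 0 := mul_nonneg (mul_nonneg hD0 hk0) hpos.le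
  have p2 : b*(1 - D*s) > 0 := mul_pos hpos (by linarith)
  nlinarith [p1, p2, hq2]

private lemma key (d : ℕ) (x y : Fin (d+1) → EuclideanSpace ℝ (Fin d))
    (hx : ∀ i j, i ≠ j → ‖x i - x j‖ = 1)
    (hy : ∀ i j, i ≠ j → ‖y i - y j‖ = 1)
    (hle : ∀ i j, ‖x i - y j‖ ≤ 1) (j : Fin (d+1)) : ∃ i, x i = y j := by
  have hD1 : (0:ℝ) < (d:ℝ)+1 := by positivity
  have hD0 : (0:ℝ) ≤ (d:ℝ) := Nat.cast_nonneg d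
  set s : ℝ := 1/(2*((d:ℝ)+1)) with hsdef
  have hs : 2*((d:ℝ)+1)*s = 1 := by rw [hsdef]; field_simp
  have hs0 : 0 < s := by rw [hsdef]; positivity
  set c : EuclideanSpace ℝ (Fin d) := ((d:ℝ)+1)⁻¹ • (∑ k, x k) with hc
  set c' : EuclideanSpace ℝ (Fin d) := ((d:ℝ)+1)⁻¹ • (∑ k, y k) with hc'
  set e : Fin (d+1) → EuclideanSpace ℝ (Fin d) := fun i => x i - c with he
  set f : Fin (d+1) → EuclideanSpace ℝ (Fin d) := fun i => y i - c' with hf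
  have hge : ∀ a b, ⟪e a, e b⟫ =
      if a = b then (d:ℝ)/(2*((d:ℝ)+1)) else -(1/(2*((d:ℝ)+1))) := by
    intro a b; simp only [he, hc]; exact simplex_gram d x hx a b
  have hgf : ∀ a b, ⟪f a, f b⟫ =
      if a = b then (d:ℝ)/(2*((d:ℝ)+1)) else -(1/(2*((d:ℝ)+1))) := by
    intro a b; simp only [hf, hc']; exact simplex_gram d y hy a b
  have hesum : ∑ i, e i = 0 := gram_sum_zero d e hge
  have hfsum : ∑ i, f i = 0 := gram_sum_zero d f hgf
  have hen : ∀ a, ‖e a‖^2 = (d:ℝ)*s := by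
    intro a
    have h1 := hge a a
    rw [if_pos rfl, real_inner_self_eq_norm_sq] at h1
    rw [h1, hsdef, mul_one_div]
  have hfn : ∀ a, ‖f a‖^2 = (d:ℝ)*s := by
    intro a
    have h1 := hgf a a
    rw [if_pos rfl, real_inner_self_eq_norm_sq] at h1
    rw [h1, hsdef, mul_one_div]
  set v : EuclideanSpace ℝ (Fin d) := c' - c with hv
  set β : Fin (d+1) → ℝ := fun j' => ⟪f j', v⟫ + ‖v‖^2/2 with hβdef
  have setup : ∀ j' : Fin (d+1),
      (∑ i, (1 - ‖x i - y j'‖^2)/2 = ((d:ℝ)+1)*(s - β j')) ∧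
      (∑ i, ((1 - ‖x i - y j'‖^2)/2)^2
        = ((d:ℝ)*s + 2*β j')/2 + ((d:ℝ)+1)*(s - β j')^2) := by
    intro j'
    set m : EuclideanSpace ℝ (Fin d) := y j' - c with hm
    have hmfv : m = f j' + v := by
      rw [hm]; simp only [hf, hv]; abel
    have hmn : ‖m‖^2 = (d:ℝ)*s + 2*β j' := by
      rw [hmfv, norm_add_sq_real, hfn j']
      simp only [hβdef]
      ring
    have hue : ∀ i, (1 - ‖x i - y j'‖^2)/2 = ⟪e i, m⟫ + (s - β j') := by
      intro i
      have hxm : x i - y j' = e i - m := by simp only [he, hm]; abel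
      rw [hxm, norm_sub_sq_real, hen i, hmn]
      have h2 : ((d:ℝ)+1)*s = 1/2 := by linarith
      linarith [h2]
    constructor
    · rw [Finset.sum_congr rfl fun i _ => hue i, Finset.sum_add_distrib, ← sum_inner,
        hesum, inner_zero_left, Finset.sum_const, Finset.card_univ, Fintype.card_fin,
        nsmul_eq_mul]
      push_cast; ring
    · rw [Finset.sum_congr rfl fun i _ => by rw [hue i]]
      rw [Finset.sum_congr rfl fun i _ => (by ring :
          (⟪e i, m⟫ + (s - β j'))^2
            = ⟪e i, m⟫^2 + (2*(s - β j'))*⟪e i, m⟫ + (s - β j')^2)]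
      rw [Finset.sum_add_distrib, Finset.sum_add_distrib, frame_identity d e hge m,
        ← Finset.mul_sum, ← sum_inner, hesum, inner_zero_left, mul_zero, add_zero,
        Finset.sum_const, Finset.card_univ, Fintype.card_fin, nsmul_eq_mul, hmn]
      push_cast; ring
  have hu0 : ∀ (j' : Fin (d+1)) i, 0 ≤ (1 - ‖x i - y j'‖^2)/2 := by
    intro j' i
    exact arith0 _ (norm_nonneg _) (hle i j')
  have hsums : ∀ j' : Fin (d+1), ∑ i, ((1 - ‖x i - y j'‖^2)/2)^2
      ≤ (∑ i, (1 - ‖x i - y j'‖^2)/2)^2 := by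
    intro j'
    calc ∑ i, ((1 - ‖x i - y j'‖^2)/2)^2
        ≤ ∑ i, ((1 - ‖x i - y j'‖^2)/2) * (∑ k, (1 - ‖x k - y j'‖^2)/2) := by
          refine Finset.sum_le_sum fun i _ => ?_
          have h1 : (1 - ‖x i - y j'‖^2)/2 ≤ ∑ k, (1 - ‖x k - y j'‖^2)/2 :=
            Finset.single_le_sum (fun k _ => hu0 j' k) (Finset.mem_univ i)
          rw [sq]
          exact mul_le_mul_of_nonneg_left h1 (hu0 j' i)
      _ = (∑ i, (1 - ‖x i - y j'‖^2)/2)^2 := by rw [← Finset.sum_mul]; ring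
  have hβle : ∀ j', β j' ≤ 0 := by
    intro j'
    obtain ⟨hA, hQ⟩ := setup j'
    have hQA := hsums j'
    rw [hA, hQ] at hQA
    have hk0 : 0 ≤ s - β j' := by
      have h1 : 0 ≤ ∑ i, (1 - ‖x i - y j'‖^2)/2 :=
        Finset.sum_nonneg fun i _ => hu0 j' i
      rw [hA] at h1
      exact nonneg_of_mul_nonneg_right h1 hD1
    exact arith1 (d:ℝ) s (β j') hD0 hD1 hs hk0 hQA
  have hvzero : v = 0 := by
    have hsumβ : ∑ j', β j' = ((d:ℝ)+1) * (‖v‖^2/2) := by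
      simp only [hβdef]
      rw [Finset.sum_add_distrib, ← sum_inner, hfsum, inner_zero_left, zero_add,
        Finset.sum_const, Finset.card_univ, Fintype.card_fin, nsmul_eq_mul]
      push_cast; ring
    have h1 : ∑ j', β j' ≤ 0 := Finset.sum_nonpos fun j' _ => hβle j'
    have h2 : ‖v‖ = 0 := by
      by_contra hne
      have hp0 : 0 < ‖v‖ := lt_of_le_of_ne (norm_nonneg v) (Ne.symm hne)
      have hp1 : 0 < ((d:ℝ)+1)*(‖v‖^2/2) := by
        apply mul_pos hD1
        have := pow_pos hp0 2
        linarith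
      rw [← hsumβ] at hp1
      linarith
    exact norm_eq_zero.mp h2
  have hβ0 : β j = 0 := by simp [hβdef, hvzero]
  obtain ⟨hA, hQ⟩ := setup j
  rw [hβ0] at hA hQ
  have hAval : ∑ i, (1 - ‖x i - y j‖^2)/2 = 1/2 := by
    rw [hA]; linear_combination hs / 2
  have hQval : ∑ i, ((1 - ‖x i - y j‖^2)/2)^2 = 1/4 := by
    rw [hQ]; linear_combination (s/2 + 1/4) * hs
  have hub : ∀ i, (1 - ‖x i - y j‖^2)/2 ≤ 1/2 := by
    intro i
    have h1 : (1 - ‖x i - y j‖^2)/2 ≤ ∑ k, (1 - ‖x k - y j‖^2)/2 :=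
      Finset.single_le_sum (fun k _ => hu0 j k) (Finset.mem_univ i)
    rw [hAval] at h1; exact h1
  have hsum0 : ∑ i, ((1 - ‖x i - y j‖^2)/2) * (1/2 - (1 - ‖x i - y j‖^2)/2) = 0 := by
    rw [Finset.sum_congr rfl fun i _ => (by ring :
      ((1 - ‖x i - y j‖^2)/2) * (1/2 - (1 - ‖x i - y j‖^2)/2)
        = (1/2)*((1 - ‖x i - y j‖^2)/2) - ((1 - ‖x i - y j‖^2)/2)^2)]
    rw [Finset.sum_sub_distrib, ← Finset.mul_sum, hAval, hQval]
    norm_num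
  have hterm := (Finset.sum_eq_zero_iff_of_nonneg (fun i _ =>
    mul_nonneg (hu0 j i) (by linarith [hub i]))).mp hsum0
  obtain ⟨i₀, -, hi₀⟩ := Finset.exists_ne_zero_of_sum_ne_zero
    (by rw [hAval]; norm_num :
      ∑ i, (1 - ‖x i - y j‖^2)/2 ≠ 0)
  have h5 := hterm i₀ (Finset.mem_univ i₀)
  have h6 : (1 - ‖x i₀ - y j‖^2)/2 = 1/2 := by
    rcases mul_eq_zero.mp h5 with h | h
    · exact absurd h hi₀
    · linarith
  have h7 : ‖x i₀ - y j‖^2 = 0 := by linarith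
  have h8 : x i₀ - y j = 0 := by
    rw [← norm_eq_zero]
    exact (pow_eq_zero_iff (n := 2) (by norm_num)).mp h7
  exact ⟨i₀, by rwa [sub_eq_zero] at h8⟩


theorem unique_regular_simplex
    (d : ℕ) (x y : Fin (d + 1) → EuclideanSpace ℝ (Fin d))
    (hx : ∀ i j, i ≠ j → ‖x i - x j‖ = 1)
    (hy : ∀ i j, i ≠ j → ‖y i - y j‖ = 1)
    (hdiam : Metric.diam (Set.range x ∪ Set.range y) = 1) :
    Set.range x = Set.range y := by
  have hb : Bornology.IsBounded (Set.range x ∪ Set.range y) :=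
    ((Set.finite_range x).union (Set.finite_range y)).isBounded
  have hle : ∀ i j, ‖x i - y j‖ ≤ 1 := by
    intro i j
    have h1 := Metric.dist_le_diam_of_mem hb (Set.mem_union_left _ ⟨i, rfl⟩)
      (Set.mem_union_right _ ⟨j, rfl⟩)
    rw [hdiam] at h1
    rwa [dist_eq_norm] at h1
  have hle' : ∀ i j, ‖y i - x j‖ ≤ 1 := by
    intro i j; rw [norm_sub_rev]; exact hle j i
  apply Set.Subset.antisymm
  · rintro _ ⟨i, rfl⟩
    obtain ⟨i₀, h⟩ := key d y x hy hx hle' i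
    exact ⟨i₀, h⟩
  · rintro _ ⟨j, rfl⟩
    obtain ⟨i₀, h⟩ := key d x y hx hy hle j
    exact ⟨i₀, h⟩
end

section
/- Let x_0,…,x_d be vertices of a regular simplex of edge length √2 centered at the origin in ℝ^d (so ∑ x_i = 0 and ‖x_i‖² = d/(d+1)). Let x ∈ ℝ^d satisfy ‖x‖² = d/(d+1) and ‖x - x_i‖ ≤ √2 for all i. Then x = x_{i*} for some index i*. -/
open RealInnerProductSpace

theorem point_on_circumsphere_is_vertex
    (d : ℕ) (x : Fin (d + 1) → EuclideanSpace ℝ (Fin d))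
    (hedge : ∀ i j, i ≠ j → ‖x i - x j‖ = Real.sqrt 2)
    (hcenter : ∑ i, x i = 0)
    (hnorm : ∀ i, ‖x i‖ ^ 2 = (d : ℝ) / (d + 1))
    (y : EuclideanSpace ℝ (Fin d))
    (hy : ‖y‖ ^ 2 = (d : ℝ) / (d + 1))
    (hclose : ∀ i, ‖y - x i‖ ≤ Real.sqrt 2) :
    ∃ i, y = x i := by
  have hN : (0:ℝ) < (d:ℝ) + 1 := by positivity
  -- inner products between vertices
  have hip : ∀ i j, ⟪x i, x j⟫ = (if i = j then 1 else 0) - 1/((d:ℝ)+1) := by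
    intro i j
    by_cases h : i = j
    · subst h
      rw [if_pos rfl, real_inner_self_eq_norm_sq, hnorm]
      field_simp
      ring
    · rw [if_neg h]
      have h2 : ‖x i - x j‖^2 = 2 := by
        rw [hedge i j h, Real.sq_sqrt]; norm_num
      rw [norm_sub_sq_real, hnorm, hnorm] at h2
      have : ⟪x i, x j⟫ = (d:ℝ)/(d+1) - 1 := by linarith
      rw [this]; field_simp
      ring
  have key : (d:ℝ)/((d:ℝ)+1) - 1 = -(1/((d:ℝ)+1)) := by field_simp; ring
  set b : Fin (d+1) → ℝ := fun i => ⟪y, x i⟫ + 1/((d:ℝ)+1) with hbdef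
  have hb0 : ∀ i, 0 ≤ b i := by
    intro i
    have h2 : ‖y - x i‖^2 ≤ 2 := by
      calc ‖y - x i‖^2 ≤ (Real.sqrt 2)^2 :=
            pow_le_pow_left₀ (norm_nonneg _) (hclose i) 2
        _ = 2 := Real.sq_sqrt (by norm_num)
    rw [norm_sub_sq_real, hy, hnorm] at h2
    simp only [hbdef]
    linarith
  have hbsum : ∑ i, b i = 1 := by
    have hsum0 : ∑ i, ⟪y, x i⟫ = 0 := by
      rw [← inner_sum, hcenter, inner_zero_right]
    simp only [hbdef]
    rw [Finset.sum_add_distrib, hsum0, Finset.sum_const, Finset.card_univ,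
      Fintype.card_fin]
    rw [zero_add, nsmul_eq_mul]; push_cast; exact mul_one_div_cancel (ne_of_gt hN)
  set w : EuclideanSpace ℝ (Fin d) := ∑ i, b i • x i with hwdef
  have hxw : ∀ j, ⟪x j, w⟫ = b j - 1/((d:ℝ)+1) := by
    intro j
    rw [hwdef, inner_sum]
    simp only [real_inner_smul_right, hip, mul_sub]
    rw [Finset.sum_sub_distrib, ← Finset.sum_mul, hbsum]
    simp [Finset.sum_ite_eq, mul_ite]
  -- linear independence of x ∘ succ
  have hli : LinearIndependent ℝ (fun i : Fin d => x i.succ) := by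
    rw [Fintype.linearIndependent_iff]
    intro g hg
    have hQ : ∑ i, (g i)^2 = (∑ i, g i)^2 / ((d:ℝ)+1) := by
      have h0 : ⟪∑ i, g i • x i.succ, ∑ j, g j • x j.succ⟫ = (0:ℝ) := by
        rw [hg, inner_zero_right]
      rw [sum_inner] at h0
      simp only [inner_sum, real_inner_smul_left, real_inner_smul_right, hip,
        Fin.succ_inj] at h0
      have hstep : ∀ i : Fin d,
          ∑ j, g j * (g i * ((if i = j then 1 else 0) - 1/((d:ℝ)+1)))
          = (g i)^2 - g i * (∑ j, g j) * (1/((d:ℝ)+1)) := by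
        intro i
        simp only [mul_sub, Finset.sum_sub_distrib]
        congr 1
        · simp [mul_ite, Finset.sum_ite_eq, sq, mul_comm]
        · rw [← Finset.sum_mul]
          ring
      have h1 : ∑ i : Fin d, ∑ j : Fin d,
          g j * (g i * ((if i = j then 1 else 0) - 1/((d:ℝ)+1))) = 0 := by
        exact h0
      rw [Finset.sum_congr rfl (fun i _ => hstep i), Finset.sum_sub_distrib,
        ← Finset.sum_mul, ← Finset.sum_mul] at h1
      have h2 : (∑ i, g i) * (∑ j, g j) * (1/((d:ℝ)+1))
          = (∑ i, g i)^2 / ((d:ℝ)+1) := by ring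
      rw [h2] at h1
      linarith
    have hCS : (∑ i, g i)^2 ≤ (d:ℝ) * ∑ i, (g i)^2 := by
      have := sq_sum_le_card_mul_sum_sq (s := (Finset.univ : Finset (Fin d)))
        (f := g)
      simpa using this
    have hQ0 : ∑ i, (g i)^2 ≤ 0 := by
      have h1 : (∑ i, g i)^2 = ((d:ℝ)+1) * ∑ i, (g i)^2 := by
        rw [hQ]; field_simp
      nlinarith
    intro i
    have : ∀ j ∈ Finset.univ, (0:ℝ) ≤ (g j)^2 := fun j _ => sq_nonneg _
    have hall := (Finset.sum_eq_zero_iff_of_nonneg this).1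
      (le_antisymm hQ0 (Finset.sum_nonneg this))
    have := hall i (Finset.mem_univ i)
    exact pow_eq_zero_iff (by norm_num) |>.1 this
  have hspan : Submodule.span ℝ (Set.range (fun i : Fin d => x i.succ)) = ⊤ :=
    hli.span_eq_top_of_card_eq_finrank'
      (by simp [finrank_euclideanSpace])
  -- z := y - w is orthogonal to everything
  have hz : y - w = 0 := by
    have horth : ∀ j, ⟪x j, y - w⟫ = 0 := by
      intro j
      rw [inner_sub_right, hxw, real_inner_comm]
      simp only [hbdef]
      ring
    have hmem : y - w ∈ (Submodule.span ℝ
        (Set.range (fun i : Fin d => x i.succ)))ᗮ := by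
      rw [Submodule.mem_orthogonal]
      intro u hu
      induction hu using Submodule.span_induction with
      | mem u hu => obtain ⟨i, rfl⟩ := hu; exact horth _
      | zero => exact inner_zero_left _
      | add u v _ _ hu hv => rw [inner_add_left, hu, hv]; ring
      | smul c u _ hu => rw [real_inner_smul_left, hu]; ring
    rw [hspan, Submodule.top_orthogonal_eq_bot, Submodule.mem_bot] at hmem
    exact hmem
  have hyw : y = w := by rwa [sub_eq_zero] at hz
  -- sum of squares of b equals 1
  have hbsq : ∑ i, (b i)^2 = 1 := by
    have h1 : ⟪y, y⟫ = ∑ i, (b i)^2 - 1/((d:ℝ)+1) := by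
      nth_rewrite 2 [hyw]
      rw [inner_sum]
      simp only [real_inner_smul_right]
      have : ∀ i, ⟪y, x i⟫ = b i - 1/((d:ℝ)+1) := by
        intro i; simp only [hbdef]; ring
      calc ∑ i, b i * ⟪y, x i⟫ = ∑ i, (b i * (b i - 1/((d:ℝ)+1))) := by
            apply Finset.sum_congr rfl; intro i _; rw [this]
        _ = ∑ i, (b i)^2 - (∑ i, b i) * (1/((d:ℝ)+1)) := by
            simp only [mul_sub, Finset.sum_sub_distrib, ← Finset.sum_mul, sq]
        _ = ∑ i, (b i)^2 - 1/((d:ℝ)+1) := by rw [hbsum]; ring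
    rw [real_inner_self_eq_norm_sq, hy] at h1
    have : ((d:ℝ)+1) ≠ 0 := ne_of_gt hN
    have h2 : (∑ i, b i^2) * ((d:ℝ)+1) = 1 * ((d:ℝ)+1) := by
      field_simp at h1; linarith
    exact mul_right_cancel₀ (ne_of_gt hN) h2
  -- each b i ∈ {0,1}
  have hble : ∀ i, b i ≤ 1 := by
    intro i
    calc b i ≤ ∑ j, b j := Finset.single_le_sum (fun j _ => hb0 j)
          (Finset.mem_univ i)
      _ = 1 := hbsum
  have hzero : ∀ i ∈ Finset.univ, b i * (1 - b i) = 0 := by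
    apply (Finset.sum_eq_zero_iff_of_nonneg ?_).1
    · rw [show ∑ i, b i * (1 - b i) = (∑ i, b i) - ∑ i, (b i)^2 by
        simp only [mul_sub, mul_one, Finset.sum_sub_distrib, sq]]
      rw [hbsum, hbsq]; ring
    · intro i _
      exact mul_nonneg (hb0 i) (by linarith [hble i])
  have hex : ∃ i, b i = 1 := by
    by_contra h
    push_neg at h
    have : ∀ i ∈ Finset.univ, b i = 0 := by
      intro i _
      rcases mul_eq_zero.1 (hzero i (Finset.mem_univ i)) with h1 | h1
      · exact h1
      · exact absurd (by linarith : b i = 1) (h i)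
    rw [Finset.sum_eq_zero this] at hbsum
    norm_num at hbsum
  obtain ⟨i, hi⟩ := hex
  refine ⟨i, ?_⟩
  rw [hyw, hwdef]
  rw [Finset.sum_eq_single i]
  · rw [hi, one_smul]
  · intro j _ hj
    have hj0 : b j = 0 := by
      have hrest : ∑ k ∈ Finset.univ.erase i, b k = 0 := by
        have := Finset.add_sum_erase Finset.univ b (Finset.mem_univ i)
        rw [hbsum] at this  -- wrong direction maybe
        linarith [this]
      have := (Finset.sum_eq_zero_iff_of_nonneg
        (fun k _ => hb0 k)).1 hrest j (Finset.mem_erase.2 ⟨hj, Finset.mem_univ j⟩)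
      exact this
    rw [hj0, zero_smul]
  · intro h
    exact absurd (Finset.mem_univ i) h
end

section
/- Let S ⊂ ℝ^d be a nonempty compact set. Then there exists a subset W ⊆ S with |W| ≤ d+1 such that the Chebyshev radius of W equals the Chebyshev radius of S, where rad(A) = inf over c ∈ ℝ^d of sup over y ∈ A of ‖c - y‖. -/
noncomputable def chebyshevRadius {d : ℕ} (A : Set (EuclideanSpace ℝ (Fin d))) : ℝ :=
  ⨅ c : EuclideanSpace ℝ (Fin d), sSup ((fun y => dist c y) '' A)

open Metric Set Filter

namespace ChebAux

variable {d : ℕ}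

/-- The farthest-distance function. -/
noncomputable def g (A : Set (EuclideanSpace ℝ (Fin d))) (c : EuclideanSpace ℝ (Fin d)) : ℝ :=
  sSup ((fun y => dist c y) '' A)

lemma cheb_eq (A : Set (EuclideanSpace ℝ (Fin d))) :
    chebyshevRadius A = ⨅ c, g A c := rfl

lemma bddAbove_img {A : Set (EuclideanSpace ℝ (Fin d))} (hA : IsCompact A)
    (c : EuclideanSpace ℝ (Fin d)) : BddAbove ((fun y => dist c y) '' A) :=
  (hA.image (continuous_const.dist continuous_id)).bddAbove

lemma le_g {A : Set (EuclideanSpace ℝ (Fin d))} (hA : IsCompact A)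
    {c y : EuclideanSpace ℝ (Fin d)} (hy : y ∈ A) : dist c y ≤ g A c :=
  le_csSup (bddAbove_img hA c) ⟨y, hy, rfl⟩

lemma g_le {A : Set (EuclideanSpace ℝ (Fin d))} (hne : A.Nonempty)
    {c : EuclideanSpace ℝ (Fin d)} {r : ℝ} (h : ∀ y ∈ A, dist c y ≤ r) : g A c ≤ r := by
  refine csSup_le (hne.image _) ?_
  rintro _ ⟨y, hy, rfl⟩
  exact h y hy

lemma g_nonneg {A : Set (EuclideanSpace ℝ (Fin d))} (hA : IsCompact A) (hne : A.Nonempty)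
    (c : EuclideanSpace ℝ (Fin d)) : 0 ≤ g A c := by
  obtain ⟨y, hy⟩ := hne
  exact dist_nonneg.trans (le_g hA hy)

lemma bddBelow_g {A : Set (EuclideanSpace ℝ (Fin d))} (hA : IsCompact A) (hne : A.Nonempty) :
    BddBelow (Set.range fun c => g A c) :=
  ⟨0, by rintro _ ⟨c, rfl⟩; exact g_nonneg hA hne c⟩

lemma cheb_le_g {A : Set (EuclideanSpace ℝ (Fin d))} (hA : IsCompact A) (hne : A.Nonempty)
    (c : EuclideanSpace ℝ (Fin d)) : chebyshevRadius A ≤ g A c :=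
  ciInf_le (bddBelow_g hA hne) c

lemma cheb_mono {A B : Set (EuclideanSpace ℝ (Fin d))} (hA : IsCompact A) (hne : A.Nonempty)
    (hB : IsCompact B) (hAB : A ⊆ B) : chebyshevRadius A ≤ chebyshevRadius B := by
  rw [cheb_eq, cheb_eq]
  refine ciInf_mono (bddBelow_g hA hne) fun c => ?_
  exact csSup_le_csSup (bddAbove_img hB c) (hne.image _) (Set.image_mono hAB)

/-- Existence of a Chebyshev center for a compact nonempty set. -/
lemma exists_center {A : Set (EuclideanSpace ℝ (Fin d))} (hA : IsCompact A) (hne : A.Nonempty) :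
    ∃ c, ∀ y ∈ A, dist c y ≤ chebyshevRadius A := by
  obtain ⟨y₀, hy₀⟩ := hne
  have hlip : LipschitzWith 1 (g A) := by
    refine LipschitzWith.of_dist_le_mul fun c c' => ?_
    simp only [NNReal.coe_one, one_mul]
    rw [Real.dist_eq, abs_sub_le_iff]
    constructor
    · have : g A c ≤ g A c' + dist c c' := by
        refine g_le ⟨y₀, hy₀⟩ fun y hy => ?_
        have := le_g hA (c := c') hy
        have := dist_triangle c c' y
        linarith
      linarith
    · have : g A c' ≤ g A c + dist c c' := by
        refine g_le ⟨y₀, hy₀⟩ fun y hy => ?_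
        have := le_g hA (c := c) hy
        have h2 := dist_triangle c' c y
        rw [dist_comm c' c] at h2
        linarith
      linarith
  have hcoer : Tendsto (g A) (cocompact _) atTop := by
    refine tendsto_atTop_mono (fun c => le_g hA (c := c) hy₀) ?_
    exact tendsto_dist_right_cocompact_atTop y₀
  obtain ⟨c₀, hc₀⟩ := hlip.continuous.exists_forall_le hcoer
  have heq : chebyshevRadius A = g A c₀ := by
    refine le_antisymm (cheb_le_g hA ⟨y₀, hy₀⟩ c₀) (le_ciInf hc₀)
  exact ⟨c₀, fun y hy => heq ▸ le_g hA hy⟩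

end ChebAux

open ChebAux in
theorem exists_small_witness_of_radius
    (d : ℕ) (S : Set (EuclideanSpace ℝ (Fin d)))
    (hS : IsCompact S) (hne : S.Nonempty) :
    ∃ W ⊆ S, W.Finite ∧ W.ncard ≤ d + 1 ∧ chebyshevRadius W = chebyshevRadius S := by
  classical
  obtain ⟨x₀, hx₀⟩ := hne
  -- Chebyshev radius of tuples
  set R : (Fin (d + 1) → EuclideanSpace ℝ (Fin d)) → ℝ :=
    fun p => chebyshevRadius (Set.range p) with hR
  have hrange_cpt : ∀ p : Fin (d + 1) → EuclideanSpace ℝ (Fin d),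
      IsCompact (Set.range p) := fun p => (Set.finite_range p).isCompact
  have hrange_ne : ∀ p : Fin (d + 1) → EuclideanSpace ℝ (Fin d),
      (Set.range p).Nonempty := fun p => ⟨p 0, 0, rfl⟩
  -- R is 1-Lipschitz
  have key : ∀ p q : Fin (d + 1) → EuclideanSpace ℝ (Fin d), R p ≤ R q + dist p q := by
    intro p q
    have h1 : ∀ c, R p ≤ g (Set.range q) c + dist p q := by
      intro c
      refine (cheb_le_g (hrange_cpt p) (hrange_ne p) c).trans ?_
      refine g_le (hrange_ne p) ?_
      rintro _ ⟨i, rfl⟩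
      calc dist c (p i) ≤ dist c (q i) + dist (q i) (p i) := dist_triangle _ _ _
        _ ≤ g (Set.range q) c + dist p q := by
            have h2 : dist c (q i) ≤ g (Set.range q) c := le_g (hrange_cpt q) ⟨i, rfl⟩
            have h3 : dist (q i) (p i) ≤ dist q p := dist_le_pi_dist q p i
            rw [dist_comm q p] at h3
            linarith
    have h4 : R p - dist p q ≤ R q := le_ciInf fun c => by
      have := h1 c; simp only [g] at this; linarith
    linarith
  have hlipR : LipschitzWith 1 R := by
    refine LipschitzWith.of_dist_le_mul fun p q => ?_
    simp only [NNReal.coe_one, one_mul]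
    rw [Real.dist_eq, abs_sub_le_iff]
    have := key p q
    have h2 := key q p
    rw [dist_comm q p] at h2
    constructor <;> linarith
  -- maximize R over tuples from S
  have hK : IsCompact (Set.univ.pi fun _ : Fin (d + 1) => S) := isCompact_univ_pi fun _ => hS
  have hKne : (Set.univ.pi fun _ : Fin (d + 1) => S).Nonempty :=
    ⟨fun _ => x₀, fun i _ => hx₀⟩
  obtain ⟨p₀, hp₀K, hmax⟩ := hK.exists_isMaxOn hKne hlipR.continuous.continuousOn
  set r' := R p₀ with hr'
  have hp₀S : ∀ i, p₀ i ∈ S := fun i => hp₀K i (Set.mem_univ i)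
  -- Helly's theorem applied to closed balls of radius r' around points of S
  have hfinrank : Module.finrank ℝ (EuclideanSpace ℝ (Fin d)) = d := finrank_euclideanSpace_fin
  have hhelly : (⋂ x : S, closedBall (x : EuclideanSpace ℝ (Fin d)) r').Nonempty := by
    refine Convex.helly_theorem_compact' (𝕜 := ℝ) (fun x => convex_closedBall _ _)
      (fun x => isCompact_closedBall _ _) ?_
    intro I hI
    rw [hfinrank] at hI
    rcases I.eq_empty_or_nonempty with rfl | ⟨⟨z, hzS⟩, hzI⟩
    · simp
    -- build a tuple covering the points of I
    have hcard : I.card ≤ d + 1 := hI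
    set e := I.equivFin with he
    set p : Fin (d + 1) → EuclideanSpace ℝ (Fin d) := fun j =>
      if h : (j : ℕ) < I.card then ((e.symm ⟨j, h⟩ : I) : S) else z with hp
    have hpS : ∀ j, p j ∈ S := by
      intro j
      by_cases h : (j : ℕ) < I.card
      · simp only [hp, dif_pos h]; exact ((e.symm ⟨j, h⟩ : I) : S).2
      · simp only [hp, dif_neg h]; exact hzS
    have hcov : ∀ x : S, x ∈ I → (x : EuclideanSpace ℝ (Fin d)) ∈ Set.range p := by
      intro x hx
      set k := e ⟨x, hx⟩ with hk
      refine ⟨⟨(k : ℕ), lt_of_lt_of_le k.isLt hcard⟩, ?_⟩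
      have hlt : ((⟨(k : ℕ), lt_of_lt_of_le k.isLt hcard⟩ : Fin (d + 1)) : ℕ) < I.card :=
        k.isLt
      simp only [hp, dif_pos hlt]
      have : (⟨(k : ℕ), k.isLt⟩ : Fin I.card) = k := rfl
      rw [this, hk, Equiv.symm_apply_apply]
    -- the tuple p lies in the compact cube, so its radius is at most r'
    have hpK : p ∈ Set.univ.pi fun _ : Fin (d + 1) => S := fun i _ => hpS i
    have hRp : R p ≤ r' := hmax hpK
    obtain ⟨c, hc⟩ := exists_center (hrange_cpt p) (hrange_ne p)
    refine ⟨c, ?_⟩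
    simp only [Set.mem_iInter, mem_closedBall]
    intro x hx
    exact (hc _ (hcov x hx)).trans hRp
  obtain ⟨c, hc⟩ := hhelly
  simp only [Set.mem_iInter, mem_closedBall] at hc
  -- conclude
  have hSler' : chebyshevRadius S ≤ r' := by
    refine (cheb_le_g hS ⟨x₀, hx₀⟩ c).trans ?_
    exact g_le ⟨x₀, hx₀⟩ fun y hy => hc ⟨y, hy⟩
  have hrange_sub : Set.range p₀ ⊆ S := by rintro _ ⟨i, rfl⟩; exact hp₀S i
  have hr'leS : r' ≤ chebyshevRadius S :=
    cheb_mono (hrange_cpt p₀) (hrange_ne p₀) hS hrange_sub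
  refine ⟨Set.range p₀, hrange_sub, Set.finite_range p₀, ?_, le_antisymm hr'leS hSler'⟩
  calc (Set.range p₀).ncard = (p₀ '' Set.univ).ncard := by rw [Set.image_univ]
    _ ≤ (Set.univ : Set (Fin (d + 1))).ncard := Set.ncard_image_le Set.finite_univ
    _ = d + 1 := by rw [Set.ncard_univ]; simp
end

section
/- (Jung's theorem.) Every bounded set S ⊆ ℝ^d of diameter D has Chebyshev radius at most √(d/(2(d+1))) · D. -/
open Metric Finset Filter Topology
open scoped RealInnerProductSpace

section aux

variable {d : ℕ}

private lemma continuous_supDist (T : Finset (EuclideanSpace ℝ (Fin d))) (hT : T.Nonempty) :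
    Continuous (fun c => T.sup' hT (fun x => dist c x)) := by
  rw [continuous_iff_continuousAt]
  intro c
  exact Filter.Tendsto.finset_sup'_nhds_apply hT
    (fun x _ => ((continuous_id.dist continuous_const).tendsto c))

private lemma exists_global_min (T : Finset (EuclideanSpace ℝ (Fin d))) (hT : T.Nonempty) :
    ∃ c, ∀ c', T.sup' hT (fun x => dist c x) ≤ T.sup' hT (fun x => dist c' x) := by
  obtain ⟨x₀, hx₀⟩ := hT
  set f := fun c => T.sup' ⟨x₀, hx₀⟩ (fun x => dist c x) with hf
  have hfc : Continuous f := continuous_supDist T ⟨x₀, hx₀⟩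
  have hM0 : 0 ≤ f x₀ := le_trans (by simp) (Finset.le_sup' (fun x => dist x₀ x) hx₀)
  obtain ⟨c, hcK, hc⟩ := (isCompact_closedBall x₀ (f x₀)).exists_isMinOn
    ⟨x₀, mem_closedBall_self hM0⟩ hfc.continuousOn
  refine ⟨c, fun c' => ?_⟩
  by_cases h : c' ∈ closedBall x₀ (f x₀)
  · exact hc h
  · have h1 : f x₀ < dist c' x₀ := by
      simpa [mem_closedBall, dist_comm] using h
    have h2 : dist c' x₀ ≤ f c' := Finset.le_sup' (fun x => dist c' x) hx₀
    exact le_trans (hc (mem_closedBall_self hM0)) (le_trans h1.le h2)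

/-- Jung's theorem for finite sets of at most `d + 1` points. -/
private lemma jung_finset (d : ℕ) (T : Finset (EuclideanSpace ℝ (Fin d))) (hT : T.Nonempty)
    (hcard : T.card ≤ d + 1) {D : ℝ} (hD : 0 ≤ D)
    (hdiam : ∀ x ∈ T, ∀ y ∈ T, dist x y ≤ D) :
    ∃ c, ∀ x ∈ T, dist c x ≤ Real.sqrt (d / (2 * (d + 1))) * D := by
  classical
  obtain ⟨c, hc⟩ := exists_global_min T hT
  set f := fun c => T.sup' hT (fun x => dist c x) with hf
  set r := f c with hr
  have hr0 : 0 ≤ r := by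
    obtain ⟨x₀, hx₀⟩ := hT
    exact le_trans dist_nonneg (Finset.le_sup' (fun x => dist c x) hx₀)
  have hle : ∀ x ∈ T, dist c x ≤ r := fun x hx => Finset.le_sup' (fun x => dist c x) hx
  -- the set of touching points
  set E : Finset (EuclideanSpace ℝ (Fin d)) := T.filter (fun x => dist c x = r) with hE
  have hEsub : E ⊆ T := Finset.filter_subset _ _
  have hEne : E.Nonempty := by
    obtain ⟨x, hx, hxr⟩ := Finset.exists_mem_eq_sup' hT (fun x => dist c x)
    exact ⟨x, Finset.mem_filter.2 ⟨hx, hxr.symm⟩⟩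
  have hEr : ∀ x ∈ E, dist c x = r := fun x hx => (Finset.mem_filter.1 hx).2
  -- the center is in the convex hull of the touching points
  have hcmem : c ∈ convexHull ℝ (E : Set (EuclideanSpace ℝ (Fin d))) := by
    by_contra hcm
    set K := convexHull ℝ (E : Set (EuclideanSpace ℝ (Fin d))) with hK
    have hKconv : Convex ℝ K := convex_convexHull ℝ _
    have hKcomp : IsCompact K := E.finite_toSet.isCompact_convexHull ℝ
    have hKne : K.Nonempty := (Finset.coe_nonempty.2 hEne).mono (subset_convexHull ℝ _)
    obtain ⟨p, hpK, hp⟩ := exists_norm_eq_iInf_of_complete_convex hKne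
      (hKcomp.isClosed.isComplete) hKconv c
    have hproj : ∀ w ∈ K, ⟪c - p, w - p⟫ ≤ 0 :=
      (norm_eq_iInf_iff_real_inner_le_zero hKconv hpK).1 hp
    set v := p - c with hv
    have hvne : v ≠ 0 := sub_ne_zero.2 (fun h => hcm (h ▸ hpK))
    have hvpos : 0 < ‖v‖ := norm_pos_iff.2 hvne
    have hinnv : ∀ x ∈ E, ‖v‖ ^ 2 ≤ ⟪v, x - c⟫ := by
      intro x hx
      have hxK : x ∈ K := subset_convexHull ℝ _ (Finset.mem_coe.2 hx)
      have h1 : ⟪c - p, x - p⟫ ≤ 0 := hproj x hxK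
      have h2 : x - c = (x - p) + v := by rw [hv]; abel
      have h3 : ⟪v, x - c⟫ = ⟪v, x - p⟫ + ‖v‖ ^ 2 := by
        rw [h2, inner_add_right, real_inner_self_eq_norm_sq]
      have h4 : ⟪v, x - p⟫ = - ⟪c - p, x - p⟫ := by
        rw [hv, ← inner_neg_left]; congr 1; abel
      rw [h3, h4]; linarith
    -- eventually, moving towards `p` strictly decreases the max distance
    have hev : ∀ x ∈ T, ∀ᶠ t in 𝓝[>] (0:ℝ), dist (c + t • v) x < r := by
      intro x hx
      by_cases hxE : x ∈ E
      · filter_upwards [Ioc_mem_nhdsGT_of_mem (Set.mem_Ico.2 ⟨le_refl (0:ℝ), zero_lt_one⟩)]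
          with t ht
        obtain ⟨ht0, ht1⟩ := ht
        have hdx : dist (c + t • v) x ^ 2 = dist c x ^ 2 + 2 * (t * ⟪c - x, v⟫)
            + t ^ 2 * ‖v‖ ^ 2 := by
          rw [dist_eq_norm, dist_eq_norm]
          have : c + t • v - x = (c - x) + t • v := by abel
          rw [this, norm_add_sq_real, real_inner_smul_right, norm_smul]
          simp [mul_pow]
        have hcx : ⟪c - x, v⟫ ≤ - ‖v‖ ^ 2 := by
          have := hinnv x hxE
          have h5 : ⟪c - x, v⟫ = - ⟪v, x - c⟫ := by
            rw [real_inner_comm, ← neg_sub x c, inner_neg_right]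
          linarith
        have hrx : dist c x = r := hEr x hxE
        have hsq : dist (c + t • v) x ^ 2 < r ^ 2 := by
          rw [hdx, hrx]
          nlinarith [hvpos, sq_nonneg t, mul_pos ht0 (mul_pos hvpos hvpos)]
        have := lt_of_pow_lt_pow_left₀ 2 hr0 hsq
        exact this
      · have hlt : dist c x < r :=
          lt_of_le_of_ne (hle x hx) (fun h => hxE (Finset.mem_filter.2 ⟨hx, h⟩))
        have hcont : Filter.Tendsto (fun t : ℝ => dist (c + t • v) x) (𝓝 0)
            (𝓝 (dist c x)) := by
          have : Continuous (fun t : ℝ => dist (c + t • v) x) :=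
            (continuous_const.add (continuous_id.smul continuous_const)).dist
              continuous_const
          have h0 := this.tendsto 0
          simpa using h0
        exact (hcont.eventually_lt_const hlt).filter_mono nhdsWithin_le_nhds
    have hall : ∀ᶠ t in 𝓝[>] (0:ℝ), ∀ x ∈ T, dist (c + t • v) x < r :=
      (Filter.eventually_all_finset T).2 hev
    obtain ⟨t, ht⟩ := hall.exists
    have : f (c + t • v) < r := (Finset.sup'_lt_iff hT).2 ht
    exact absurd (hc (c + t • v)) (not_le.2 this)
  -- extract convex combination weights
  rw [Finset.convexHull_eq] at hcmem
  obtain ⟨w, hw0, hw1, hwc⟩ := hcmem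
  rw [Finset.centerMass_eq_of_sum_1 _ _ hw1] at hwc
  simp only [id] at hwc
  -- the weighted sum of the vectors `x - c` vanishes
  have hzero : ∑ x ∈ E, w x • (x - c) = 0 := by
    have : ∑ x ∈ E, w x • (x - c) = (∑ x ∈ E, w x • x) - (∑ x ∈ E, w x) • c := by
      rw [Finset.sum_smul]
      rw [← Finset.sum_sub_distrib]
      exact Finset.sum_congr rfl fun x _ => smul_sub (w x) x c
    rw [this, hwc, hw1, one_smul, sub_self]
  have hinner : ∀ y : EuclideanSpace ℝ (Fin d), ∑ x ∈ E, w x * ⟪x - c, y - c⟫ = 0 := by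
    intro y
    calc ∑ x ∈ E, w x * ⟪x - c, y - c⟫ = ∑ x ∈ E, ⟪w x • (x - c), y - c⟫ := by
          exact Finset.sum_congr rfl fun x _ => (real_inner_smul_left _ _ _).symm
      _ = ⟪∑ x ∈ E, w x • (x - c), y - c⟫ := (sum_inner _ _ _).symm
      _ = 0 := by rw [hzero, inner_zero_left]
  have hrow : ∀ y ∈ E, ∑ x ∈ E, w x * dist x y ^ 2 = 2 * r ^ 2 := by
    intro y hyE
    have hdx : ∀ x ∈ E, dist x y ^ 2 = 2 * r ^ 2 - 2 * ⟪x - c, y - c⟫ := by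
      intro x hxE
      have hx' : ‖x - c‖ = r := by rw [← dist_eq_norm, dist_comm]; exact hEr x hxE
      have hy' : ‖y - c‖ = r := by rw [← dist_eq_norm, dist_comm]; exact hEr y hyE
      have hxy : x - y = (x - c) - (y - c) := by abel
      rw [dist_eq_norm, hxy, norm_sub_sq_real, hx', hy']
      ring
    calc ∑ x ∈ E, w x * dist x y ^ 2
        = ∑ x ∈ E, (w x * (2 * r ^ 2) - 2 * (w x * ⟪x - c, y - c⟫)) :=
          Finset.sum_congr rfl fun x hx => by rw [hdx x hx]; ring
      _ = (∑ x ∈ E, w x) * (2 * r ^ 2) - 2 * ∑ x ∈ E, w x * ⟪x - c, y - c⟫ := by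
          rw [Finset.sum_sub_distrib, ← Finset.sum_mul, Finset.mul_sum]
      _ = 2 * r ^ 2 := by rw [hw1, hinner y]; ring
  have key : ∑ y ∈ E, ∑ x ∈ E, w y * (w x * dist x y ^ 2) = 2 * r ^ 2 := by
    calc ∑ y ∈ E, ∑ x ∈ E, w y * (w x * dist x y ^ 2)
        = ∑ y ∈ E, w y * ∑ x ∈ E, w x * dist x y ^ 2 := by
          exact Finset.sum_congr rfl fun y _ => (Finset.mul_sum _ _ _).symm
      _ = ∑ y ∈ E, w y * (2 * r ^ 2) :=
          Finset.sum_congr rfl fun y hy => by rw [hrow y hy]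
      _ = 2 * r ^ 2 := by rw [← Finset.sum_mul, hw1, one_mul]
  -- bound the double sum using the diameter
  have hbnd : ∑ y ∈ E, ∑ x ∈ E, w y * (w x * dist x y ^ 2)
      ≤ D ^ 2 - (∑ x ∈ E, w x ^ 2) * D ^ 2 := by
    have hterm : ∀ y ∈ E, ∀ x ∈ E, w y * (w x * dist x y ^ 2)
        ≤ w y * w x * D ^ 2 - (if x = y then w x ^ 2 * D ^ 2 else 0) := by
      intro y hy x hx
      by_cases hxy : x = y
      · subst hxy
        rw [if_pos rfl, dist_self]
        nlinarith [sq_nonneg (w x * D)]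
      · rw [if_neg hxy]
        have hd : dist x y ≤ D := hdiam x (hEsub hx) y (hEsub hy)
        have hd2 : dist x y ^ 2 ≤ D ^ 2 := pow_le_pow_left₀ dist_nonneg hd 2
        have := mul_le_mul_of_nonneg_left hd2 (hw0 x hx)
        have := mul_le_mul_of_nonneg_left this (hw0 y hy)
        linarith
    calc ∑ y ∈ E, ∑ x ∈ E, w y * (w x * dist x y ^ 2)
        ≤ ∑ y ∈ E, ∑ x ∈ E, (w y * w x * D ^ 2 - (if x = y then w x ^ 2 * D ^ 2 else 0)) :=
          Finset.sum_le_sum fun y hy => Finset.sum_le_sum fun x hx => hterm y hy x hx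
      _ = (∑ y ∈ E, ∑ x ∈ E, w y * w x * D ^ 2) - ∑ y ∈ E, w y ^ 2 * D ^ 2 := by
          rw [← Finset.sum_sub_distrib]
          refine Finset.sum_congr rfl fun y hy => ?_
          rw [Finset.sum_sub_distrib, Finset.sum_ite_eq' E y (fun x => w x ^ 2 * D ^ 2),
            if_pos hy]
      _ = D ^ 2 - (∑ x ∈ E, w x ^ 2) * D ^ 2 := by
          have : ∑ y ∈ E, ∑ x ∈ E, w y * w x * D ^ 2 = D ^ 2 := by
            have : ∀ y ∈ E, ∑ x ∈ E, w y * w x * D ^ 2 = w y * D ^ 2 := by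
              intro y hy
              rw [show (fun x => w y * w x * D ^ 2) = (fun x => w x * (w y * D ^ 2)) from
                funext fun x => by ring]
              rw [← Finset.sum_mul, hw1, one_mul]
            rw [Finset.sum_congr rfl this, ← Finset.sum_mul, hw1, one_mul]
          rw [this, Finset.sum_mul]
  -- Cauchy-Schwarz on the weights
  have hCS : 1 ≤ ((d : ℝ) + 1) * ∑ x ∈ E, w x ^ 2 := by
    have h1 : (1 : ℝ) = (∑ x ∈ E, w x) ^ 2 := by rw [hw1]; norm_num
    have h2 : (∑ x ∈ E, w x) ^ 2 ≤ (E.card : ℝ) * ∑ x ∈ E, w x ^ 2 := by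
      exact_mod_cast sq_sum_le_card_mul_sum_sq (s := E) (f := w)
    have h3 : (E.card : ℝ) ≤ (d : ℝ) + 1 := by
      have := le_trans (Finset.card_le_card hEsub) hcard
      exact_mod_cast this
    have h4 : 0 ≤ ∑ x ∈ E, w x ^ 2 := Finset.sum_nonneg fun x _ => sq_nonneg _
    nlinarith
  -- conclude
  have hd1 : (0 : ℝ) < (d : ℝ) + 1 := by positivity
  have hr2 : r ^ 2 ≤ (d : ℝ) / (2 * ((d : ℝ) + 1)) * D ^ 2 := by
    rw [div_mul_eq_mul_div, le_div_iff₀ (by positivity)]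
    have h5 : 0 ≤ D ^ 2 := sq_nonneg D
    nlinarith [key ▸ hbnd]
  have hrfin : r ≤ Real.sqrt ((d : ℝ) / (2 * ((d : ℝ) + 1))) * D := by
    have := Real.sqrt_le_sqrt hr2
    rw [Real.sqrt_sq hr0] at this
    rwa [Real.sqrt_mul (by positivity) (D ^ 2), Real.sqrt_sq hD] at this
  exact ⟨c, fun x hx => le_trans (hle x hx) hrfin⟩

end aux

theorem jung_theorem
    (d : ℕ) (S : Set (EuclideanSpace ℝ (Fin d)))
    (hS : Bornology.IsBounded S) :
    chebyshevRadius S ≤ Real.sqrt (d / (2 * (d + 1))) * Metric.diam S := by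
  classical
  rcases S.eq_empty_or_nonempty with rfl | hSne
  · have h0 : chebyshevRadius (∅ : Set (EuclideanSpace ℝ (Fin d))) = 0 := by
      simp [chebyshevRadius, Real.sSup_empty]
    rw [h0]
    positivity
  set ρ : ℝ := Real.sqrt (d / (2 * (d + 1))) * Metric.diam S with hρ
  have hρ0 : 0 ≤ ρ := mul_nonneg (Real.sqrt_nonneg _) Metric.diam_nonneg
  have hHelly : (⋂ y : S, closedBall (y : EuclideanSpace ℝ (Fin d)) ρ).Nonempty := by
    apply Convex.helly_theorem_compact' (𝕜 := ℝ)
      (F := fun y : S => closedBall (y : EuclideanSpace ℝ (Fin d)) ρ)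
      (fun _ => convex_closedBall _ _) (fun _ => isCompact_closedBall _ _)
    intro I hI
    rcases I.eq_empty_or_nonempty with rfl | hIne
    · simp
    set T : Finset (EuclideanSpace ℝ (Fin d)) :=
      I.image Subtype.val with hTdef
    have hTne : T.Nonempty := hIne.image Subtype.val
    have hTcard : T.card ≤ d + 1 := by
      refine le_trans (Finset.card_image_le) ?_
      rwa [finrank_euclideanSpace_fin] at hI
    have hTS : ∀ x ∈ T, x ∈ S := by
      intro x hx
      obtain ⟨i, _, rfl⟩ := Finset.mem_image.1 hx
      exact i.2
    have hdiam : ∀ x ∈ T, ∀ y ∈ T, dist x y ≤ Metric.diam S := fun x hx y hy =>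
      Metric.dist_le_diam_of_mem hS (hTS x hx) (hTS y hy)
    obtain ⟨c, hc⟩ := jung_finset d T hTne hTcard Metric.diam_nonneg hdiam
    refine ⟨c, ?_⟩
    simp only [Set.mem_iInter]
    intro i hi
    exact mem_closedBall.2 (hc _ (Finset.mem_image_of_mem Subtype.val hi))
  obtain ⟨c, hc⟩ := hHelly
  simp only [Set.mem_iInter, mem_closedBall] at hc
  have hbdd : BddBelow (Set.range fun c : EuclideanSpace ℝ (Fin d) =>
      sSup ((fun y => dist c y) '' S)) := by
    refine ⟨0, ?_⟩
    rintro _ ⟨c', rfl⟩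
    exact Real.sSup_nonneg (by rintro _ ⟨y, _, rfl⟩; exact dist_nonneg)
  have h1 : chebyshevRadius S ≤ sSup ((fun y => dist c y) '' S) := ciInf_le hbdd c
  have h2 : sSup ((fun y => dist c y) '' S) ≤ ρ := by
    apply Real.sSup_le _ hρ0
    rintro _ ⟨y, hy, rfl⟩
    exact hc ⟨y, hy⟩
  exact le_trans h1 h2
end

section
/- Let Δ = {x_0, x_1, …, x_d} be a regular simplex in ℝ^d with edge length 1, let 0 < α < 1/4, and let v be a unit vector. Suppose the edge x_0 x_1 satisfies ⟨v, x_0 - x_1⟩ = max_{i,j} ⟨v, x_i - x_j⟩ and ⟨v, x_0 - x_1⟩ ≤ 1 - 2α. Set r = ⟨x_0 + x_1, v⟩/2. Then for every vertex x_i and every e with ‖e‖ ≤ α, the point x = x_i + e satisfies |⟨x, v⟩ - r| ≤ 1/2. -/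
/-! By maximality of the edge `x 0 x 1` in direction `v`, every vertex projects onto `v` between
`x 1` and `x 0`, hence within `(1 - 2α) / 2` of the midpoint `r`; a perturbation of norm at most `α`
moves the projection onto the unit vector `v` by at most `α`. -/

open RealInnerProductSpace

lemma abs_sub_add_div_two_le {a b t : ℝ} (ht : t ∈ Set.Icc a b) :
    |t - (a + b) / 2| ≤ (b - a) / 2 := by
  rw [abs_le]
  constructor <;> linarith [ht.1, ht.2]

section InnerProduct

variable {E : Type*} [NormedAddCommGroup E] [InnerProductSpace ℝ E]

lemma abs_inner_add_sub_le_of_norm_eq_one {v : E} (hv : ‖v‖ = 1) (y e : E) (c : ℝ) :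
    |⟪y + e, v⟫ - c| ≤ |⟪y, v⟫ - c| + ‖e‖ :=
  calc |⟪y + e, v⟫ - c| = |(⟪y, v⟫ - c) + ⟪e, v⟫| := by rw [inner_add_left, sub_add_eq_add_sub]
    _ ≤ |⟪y, v⟫ - c| + |⟪e, v⟫| := abs_add_le _ _
    _ ≤ |⟪y, v⟫ - c| + ‖e‖ := by
      grw [abs_real_inner_le_norm, hv, mul_one]

lemma inner_mem_Icc_of_forall_inner_sub_le {ι : Type*} {x : ι → E} {v : E} {a b : ι}
    (hmax : ∀ i j, ⟪v, x i - x j⟫ ≤ ⟪v, x a - x b⟫) (i : ι) :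
    ⟪x i, v⟫ ∈ Set.Icc ⟪x b, v⟫ ⟪x a, v⟫ := by
  have hia := hmax i b
  have hbi := hmax a i
  simp only [inner_sub_right, real_inner_comm v, Set.mem_Icc] at hia hbi ⊢
  constructor <;> linarith

end InnerProduct

theorem simplex_neighborhood_in_slab_general
    (d : ℕ) (x : Fin (d + 1) → EuclideanSpace ℝ (Fin d))
    (α : ℝ)
    (v : EuclideanSpace ℝ (Fin d)) (hv : ‖v‖ = 1)
    (hmax : ∀ i j, ⟪v, x i - x j⟫ ≤ ⟪v, x 0 - x 1⟫)
    (hsmall : ⟪v, x 0 - x 1⟫ ≤ 1 - 2 * α) :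
    ∀ (i : Fin (d + 1)) (e : EuclideanSpace ℝ (Fin d)), ‖e‖ ≤ α →
      |⟪x i + e, v⟫ - ⟪x 0 + x 1, v⟫ / 2| ≤ 1 / 2 := by
  intro i e he
  have hvertex : |⟪x i, v⟫ - ⟪x 0 + x 1, v⟫ / 2| ≤ (⟪x 0, v⟫ - ⟪x 1, v⟫) / 2 := by
    rw [inner_add_left, add_comm]
    exact abs_sub_add_div_two_le (inner_mem_Icc_of_forall_inner_sub_le hmax i)
  have hwidth : ⟪x 0, v⟫ - ⟪x 1, v⟫ ≤ 1 - 2 * α := by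
    rwa [← inner_sub_left, real_inner_comm]
  calc |⟪x i + e, v⟫ - ⟪x 0 + x 1, v⟫ / 2|
      ≤ |⟪x i, v⟫ - ⟪x 0 + x 1, v⟫ / 2| + ‖e‖ := abs_inner_add_sub_le_of_norm_eq_one hv _ _ _
    _ ≤ 1 / 2 := by linarith

theorem simplex_neighborhood_in_slab
    (d : ℕ) (x : Fin (d + 1) → EuclideanSpace ℝ (Fin d))
    (hedge : ∀ i j, i ≠ j → ‖x i - x j‖ = 1)
    (α : ℝ) (hα : 0 < α) (hα2 : α < 1 / 4)
    (v : EuclideanSpace ℝ (Fin d)) (hv : ‖v‖ = 1)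
    (hmax : ∀ i j, ⟪v, x i - x j⟫ ≤ ⟪v, x 0 - x 1⟫)
    (hsmall : ⟪v, x 0 - x 1⟫ ≤ 1 - 2 * α) :
    ∀ (i : Fin (d + 1)) (e : EuclideanSpace ℝ (Fin d)), ‖e‖ ≤ α →
      |⟪x i + e, v⟫ - ⟪x 0 + x 1, v⟫ / 2| ≤ 1 / 2 :=
  simplex_neighborhood_in_slab_general d x α v hv hmax hsmall
end

section
/- Let Δ = {x_0,…,x_d} be a regular simplex of edge length 1 in ℝ^d, and let {y_0,…,y_d} be points with ‖y_i - x_i‖ ≤ γ for all i, where 0 < γ ≤ 1/4. Suppose for each pair i ≠ j the linear constraint ⟨y_i - y_j, x_i - x_j⟩ ≤ 1 holds. Then ‖y_i - y_j‖ ≤ 1 + 4γ² for all i ≠ j. -/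
/-! Write `u = x i - x j` and `v = y i - y j`, so `‖u‖ = 1` and `‖v - u‖ ≤ 2γ`. Expanding
`‖v - u‖²` gives `‖v‖² = ‖v - u‖² + 2⟪v, u⟫ - ‖u‖²`, so the constraint `⟪v, u⟫ ≤ 1` yields
`‖v‖² ≤ 1 + 4γ²`, and `‖v‖ ≤ 1 + 4γ²` because `1 + 4γ² ≥ 1`. -/

open RealInnerProductSpace

theorem norm_sq_le_norm_sq_add_norm_sub_sq_of_inner_le {E : Type*}
    [NormedAddCommGroup E] [InnerProductSpace ℝ E] {u v : E} (h : ⟪v, u⟫ ≤ ‖u‖ ^ 2) :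
    ‖v‖ ^ 2 ≤ ‖u‖ ^ 2 + ‖v - u‖ ^ 2 := by
  rw [norm_sub_sq_real]
  linarith

theorem le_of_sq_le_of_one_le {r c : ℝ} (hr : 0 ≤ r) (hc : 1 ≤ c) (h : r ^ 2 ≤ c) : r ≤ c := by
  nlinarith

theorem refined_witness_diameter_general
    (d : ℕ) (x y : Fin (d + 1) → EuclideanSpace ℝ (Fin d))
    (hedge : ∀ i j, i ≠ j → ‖x i - x j‖ = 1)
    (γ : ℝ)
    (hclose : ∀ i, ‖y i - x i‖ ≤ γ)
    (hconstraint : ∀ i j, i ≠ j → ⟪y i - y j, x i - x j⟫ ≤ 1) :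
    ∀ i j, i ≠ j → ‖y i - y j‖ ≤ 1 + 4 * γ ^ 2 := by
  intro i j hij
  have hu : ‖x i - x j‖ = 1 := hedge i j hij
  have hdisp : ‖(y i - y j) - (x i - x j)‖ ≤ 2 * γ :=
    calc ‖(y i - y j) - (x i - x j)‖ = ‖(y i - x i) - (y j - x j)‖ := by rw [sub_sub_sub_comm]
      _ ≤ ‖y i - x i‖ + ‖y j - x j‖ := norm_sub_le _ _
      _ ≤ 2 * γ := by linarith [hclose i, hclose j]
  have hsq : ‖y i - y j‖ ^ 2 ≤ 1 + 4 * γ ^ 2 :=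
    calc ‖y i - y j‖ ^ 2 ≤ ‖x i - x j‖ ^ 2 + ‖(y i - y j) - (x i - x j)‖ ^ 2 :=
          norm_sq_le_norm_sq_add_norm_sub_sq_of_inner_le <| by
            rw [hu]; simpa using hconstraint i j hij
      _ ≤ 1 + (2 * γ) ^ 2 := by
          rw [hu, one_pow]; gcongr
      _ = 1 + 4 * γ ^ 2 := by ring
  exact le_of_sq_le_of_one_le (norm_nonneg _) (by linarith [sq_nonneg γ]) hsq

theorem refined_witness_diameter
    (d : ℕ) (x y : Fin (d + 1) → EuclideanSpace ℝ (Fin d))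
    (hedge : ∀ i j, i ≠ j → ‖x i - x j‖ = 1)
    (γ : ℝ) (hγ : 0 < γ) (hγ2 : γ ≤ 1 / 4)
    (hclose : ∀ i, ‖y i - x i‖ ≤ γ)
    (hconstraint : ∀ i j, i ≠ j → ⟪y i - y j, x i - x j⟫ ≤ 1) :
    ∀ i j, i ≠ j → ‖y i - y j‖ ≤ 1 + 4 * γ ^ 2 :=
  refined_witness_diameter_general d x y hedge γ hclose hconstraint
end

section
/- Let u, w ∈ ℝ^d with ‖u‖ = 1 and ‖w - u‖ ≤ 2γ for some 0 ≤ γ < 1/2, w ≠ 0. Then the sine of the angle between w and u is at most 2γ; consequently ⟨w, u⟩ ≥ ‖w‖ √(1 - 4γ²). -/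
open RealInnerProductSpace InnerProductGeometry

namespace InnerProductGeometry

variable {V : Type*} [NormedAddCommGroup V] [InnerProductSpace ℝ V]

/-- `sin (angle x y) * ‖y‖` is the distance from `y` to the line `ℝ ∙ x`, so it is at most the
distance from `y` to `x`. -/
theorem sin_angle_mul_norm_le_norm_sub (x y : V) : Real.sin (angle x y) * ‖y‖ ≤ ‖x - y‖ := by
  rcases eq_or_ne x 0 with rfl | hx
  · simp
  have hx₀ : 0 < ‖x‖ := norm_pos_iff.mpr hx
  refine le_of_mul_le_mul_left ?_ hx₀
  have hgap : ‖x‖ ^ 2 * ‖y‖ ^ 2 - ⟪x, y⟫ ^ 2 ≤ ‖x‖ ^ 2 * ‖x - y‖ ^ 2 := by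
    rw [norm_sub_sq_real]
    nlinarith [sq_nonneg (‖x‖ ^ 2 - ⟪x, y⟫)]
  calc ‖x‖ * (Real.sin (angle x y) * ‖y‖)
      = √(‖x‖ ^ 2 * ‖y‖ ^ 2 - ⟪x, y⟫ ^ 2) := by
        rw [← mul_assoc, mul_comm ‖x‖, mul_assoc, sin_angle_mul_norm_mul_norm,
          real_inner_self_eq_norm_sq, real_inner_self_eq_norm_sq, sq ⟪x, y⟫]
    _ ≤ √(‖x‖ ^ 2 * ‖x - y‖ ^ 2) := Real.sqrt_le_sqrt hgap
    _ = ‖x‖ * ‖x - y‖ := by rw [← mul_pow, Real.sqrt_sq (by positivity)]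

theorem inner_pos_of_norm_sub_lt_norm {x y : V} (h : ‖x - y‖ < ‖y‖) : 0 < ⟪x, y⟫ := by
  have hsq : ‖x - y‖ ^ 2 < ‖y‖ ^ 2 := by gcongr
  rw [norm_sub_sq_real] at hsq
  nlinarith [sq_nonneg ‖x‖]

theorem sqrt_one_sub_sq_le_abs_cos_angle {x y : V} {r : ℝ} (h : Real.sin (angle x y) ≤ r) :
    √(1 - r ^ 2) ≤ |Real.cos (angle x y)| := by
  rw [Real.abs_cos_eq_sqrt_one_sub_sin_sq]
  gcongr
  exact sin_angle_nonneg x y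

end InnerProductGeometry

theorem tilted_edge_estimate_general
    (d : ℕ) (u w : EuclideanSpace ℝ (Fin d))
    (hu : ‖u‖ = 1) (γ : ℝ) (hγ2 : γ < 1 / 2)
    (hwu : ‖w - u‖ ≤ 2 * γ) :
    Real.sin (angle w u) ≤ 2 * γ ∧ ‖w‖ * Real.sqrt (1 - 4 * γ ^ 2) ≤ ⟪w, u⟫ := by
  have hsin : Real.sin (angle w u) ≤ 2 * γ := by
    simpa [hu] using (sin_angle_mul_norm_le_norm_sub w u).trans hwu
  have hinner : 0 < ⟪w, u⟫ := inner_pos_of_norm_sub_lt_norm (by linarith)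
  refine ⟨hsin, ?_⟩
  calc ‖w‖ * √(1 - 4 * γ ^ 2)
      = ‖w‖ * √(1 - (2 * γ) ^ 2) := by ring_nf
    _ ≤ ‖w‖ * |Real.cos (angle w u)| := by gcongr; exact sqrt_one_sub_sq_le_abs_cos_angle hsin
    _ = |⟪w, u⟫| := by
        rw [← cos_angle_mul_norm_mul_norm, hu, mul_one, abs_mul, abs_norm, mul_comm]
    _ = ⟪w, u⟫ := abs_of_pos hinner

theorem tilted_edge_estimate
    (d : ℕ) (u w : EuclideanSpace ℝ (Fin d))
    (hu : ‖u‖ = 1) (γ : ℝ) (hγ : 0 ≤ γ) (hγ2 : γ < 1 / 2)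
    (hwu : ‖w - u‖ ≤ 2 * γ) (hw : w ≠ 0) :
    Real.sin (angle w u) ≤ 2 * γ ∧ ‖w‖ * Real.sqrt (1 - 4 * γ ^ 2) ≤ ⟪w, u⟫ :=
  tilted_edge_estimate_general d u w hu γ hγ2 hwu
end

section
/- Let Δ = {x_0,…,x_d} and Δ' = {x'_0,…,x'_d} be regular simplices of edge length 1 in ℝ^d, both centered at the origin, with ‖x_i - x'_i‖ ≤ ε for all i, where x'_i = R x_i + τ for some R ∈ O(d) and τ ∈ ℝ^d. Then (d+1)ε² ≥ (1/2)‖R - I‖²_op + ‖τ‖², and consequently ε ≥ (‖R - I‖_op + ‖τ‖)/(2√(d+1)). -/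
/-!
Write `A = R - 1`, so that `x' i - x i = A (x i) + τ`. Since `∑ x i = 0` the cross terms cancel and
`∑ ‖x' i - x i‖² = ∑ ‖A (x i)‖² + (d + 1) ‖τ‖²`. The vertices of a centred regular simplex with unit
edges have Gram matrix `⟪x i, x j⟫ = δᵢⱼ / 2 - 1 / (2 (d + 1))` and span the space, so they form a
tight frame: `∑ ⟪x i, v⟫² = ‖v‖² / 2`. Applied to `A† u` this gives `‖A‖² ≤ 2 ∑ ‖A (x i)‖²`.
-/

open scoped RealInnerProductSpace
open Finset

section EquilateralFamily

variable {E : Type*} [NormedAddCommGroup E] {ι : Type*} [Fintype ι] {x : ι → E}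

theorem sum_norm_sub_sq_of_pairwise_norm_sub_eq_one [DecidableEq ι]
    (hx : Pairwise fun i j => ‖x i - x j‖ = 1) (i : ι) :
    ∑ j, ‖x i - x j‖ ^ 2 = Fintype.card ι - 1 := by
  rw [← add_sum_erase _ _ (mem_univ i), sum_congr rfl fun j hj => by
    rw [hx (ne_of_mem_erase hj).symm, one_pow]]
  simp [card_erase_of_mem, Nat.cast_pred (Fintype.card_pos_iff.mpr ⟨i⟩)]

variable [InnerProductSpace ℝ E]

theorem sum_norm_sub_sq_of_sum_eq_zero (hcx : ∑ i, x i = 0) (i : ι) :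
    ∑ j, ‖x i - x j‖ ^ 2 = Fintype.card ι * ‖x i‖ ^ 2 + ∑ j, ‖x j‖ ^ 2 := by
  have hcross : ∑ j, ⟪x i, x j⟫ = 0 := by rw [← inner_sum, hcx, inner_zero_right]
  simp only [norm_sub_sq_real, sum_add_distrib, sum_sub_distrib, ← mul_sum, hcross, sum_const,
    card_univ, nsmul_eq_mul]
  ring

variable (hx : Pairwise fun i j => ‖x i - x j‖ = 1) (hcx : ∑ i, x i = 0)
include hx hcx

theorem norm_sq_eq_of_equilateral (i : ι) :
    ‖x i‖ ^ 2 = (Fintype.card ι - 1) / (2 * Fintype.card ι) := by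
  classical
  set n : ℝ := (Fintype.card ι : ℝ)
  have hn : 0 < n := Nat.cast_pos.mpr (Fintype.card_pos_iff.mpr ⟨i⟩)
  have key : ∀ j, n * ‖x j‖ ^ 2 + ∑ k, ‖x k‖ ^ 2 = n - 1 := fun j => by
    rw [← sum_norm_sub_sq_of_sum_eq_zero hcx, sum_norm_sub_sq_of_pairwise_norm_sub_eq_one hx]
  have htotal : ∑ k, ‖x k‖ ^ 2 = (n - 1) / 2 := by
    have := sum_congr rfl fun j (_ : j ∈ univ) => key j
    rw [sum_add_distrib, ← mul_sum, sum_const, sum_const, card_univ, nsmul_eq_mul,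
      nsmul_eq_mul] at this
    field_simp
    nlinarith
  have hi := key i
  rw [htotal] at hi
  field_simp
  linarith

theorem inner_eq_of_equilateral [DecidableEq ι] (i j : ι) :
    ⟪x i, x j⟫ = (if i = j then 1 / 2 else 0) - 1 / (2 * Fintype.card ι) := by
  have hn : (0 : ℝ) < Fintype.card ι := Nat.cast_pos.mpr (Fintype.card_pos_iff.mpr ⟨i⟩)
  split_ifs with hij
  · rw [← hij, real_inner_self_eq_norm_sq, norm_sq_eq_of_equilateral hx hcx]
    field_simp
  · have := norm_sub_sq_real (x i) (x j)
    rw [hx hij, norm_sq_eq_of_equilateral hx hcx, norm_sq_eq_of_equilateral hx hcx] at this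
    field_simp at this ⊢
    linarith

theorem sum_inner_apply_smul_eq_half_smul_of_equilateral (j : ι) :
    ∑ i, ⟪x i, x j⟫ • x i = (1 / 2 : ℝ) • x j := by
  classical
  simp only [inner_eq_of_equilateral hx hcx, sub_smul, sum_sub_distrib, ← smul_sum, hcx,
    smul_zero, sub_zero, ite_smul, zero_smul, sum_ite_eq', mem_univ, if_true]

theorem eq_of_sum_smul_eq_zero_of_equilateral {g : ι → ℝ} (hg : ∑ i, g i • x i = 0) (i j : ι) :
    g i = g j := by
  classical
  have hn : (0 : ℝ) < Fintype.card ι := Nat.cast_pos.mpr (Fintype.card_pos_iff.mpr ⟨i⟩)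
  have hmean : ∀ k, g k = (∑ l, g l) / Fintype.card ι := fun k => by
    have := congrArg (⟪·, x k⟫) hg
    simp only [sum_inner, real_inner_smul_left, inner_zero_left, inner_eq_of_equilateral hx hcx,
      mul_sub, sum_sub_distrib, ← sum_mul, mul_ite, mul_zero, sum_ite_eq', mem_univ,
      if_true] at this
    field_simp at this ⊢
    linarith
  rw [hmean i, hmean j]

end EquilateralFamily

section Simplex

variable {E : Type*} [NormedAddCommGroup E] [InnerProductSpace ℝ E] {n : ℕ} {x : Fin (n + 1) → E}
  (hx : Pairwise fun i j => ‖x i - x j‖ = 1) (hcx : ∑ i, x i = 0)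
include hx hcx

theorem linearIndependent_succ_of_equilateral : LinearIndependent ℝ fun i : Fin n => x i.succ := by
  rw [Fintype.linearIndependent_iff]
  intro g hg i
  have hg' : ∑ j, (Fin.cons 0 g : Fin (n + 1) → ℝ) j • x j = 0 := by
    simpa [Fin.sum_univ_succ] using hg
  simpa using eq_of_sum_smul_eq_zero_of_equilateral hx hcx hg' i.succ 0

variable [FiniteDimensional ℝ E] (hdim : Module.finrank ℝ E = n)
include hdim

theorem span_range_succ_of_equilateral :
    Submodule.span ℝ (Set.range fun i : Fin n => x i.succ) = ⊤ :=
  (linearIndependent_succ_of_equilateral hx hcx).span_eq_top_of_card_eq_finrank' (by simp [hdim])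

theorem sum_inner_smul_eq_half_smul_of_equilateral (v : E) :
    ∑ i, ⟪x i, v⟫ • x i = (1 / 2 : ℝ) • v := by
  let frame : E →ₗ[ℝ] E := ∑ i, (innerₛₗ ℝ (x i)).smulRight (x i)
  have hframe : frame = (1 / 2 : ℝ) • LinearMap.id := by
    refine LinearMap.ext_on (span_range_succ_of_equilateral hx hcx hdim) ?_
    rintro _ ⟨j, rfl⟩
    simpa [frame] using sum_inner_apply_smul_eq_half_smul_of_equilateral hx hcx j.succ
  simpa [frame] using LinearMap.congr_fun hframe v

theorem sum_inner_sq_eq_half_of_equilateral (v : E) :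
    ∑ i, ⟪x i, v⟫ ^ 2 = 1 / 2 * ‖v‖ ^ 2 := by
  have := congrArg (⟪·, v⟫) (sum_inner_smul_eq_half_smul_of_equilateral hx hcx hdim v)
  simpa only [sum_inner, real_inner_smul_left, real_inner_self_eq_norm_sq, ← sq] using this

end Simplex

section TightFrame

variable {E F : Type*} [NormedAddCommGroup E] [InnerProductSpace ℝ E] [CompleteSpace E]
  [NormedAddCommGroup F] [InnerProductSpace ℝ F] [CompleteSpace F] {ι : Type*} [Fintype ι]

theorem mul_sq_opNorm_le_sum_sq_norm_apply {x : ι → E} {c : ℝ} (hc : 0 < c)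
    (hframe : ∀ v, ∑ i, ⟪x i, v⟫ ^ 2 = c * ‖v‖ ^ 2) (A : E →L[ℝ] F) :
    c * ‖A‖ ^ 2 ≤ ∑ i, ‖A (x i)‖ ^ 2 := by
  set S := ∑ i, ‖A (x i)‖ ^ 2
  set B := ContinuousLinearMap.adjoint A
  have hadj : ∀ u, c * ‖B u‖ ^ 2 ≤ S * ‖u‖ ^ 2 := fun u => by
    rw [← hframe, sum_mul]
    refine sum_le_sum fun i _ => ?_
    rw [ContinuousLinearMap.adjoint_inner_right, ← mul_pow, ← sq_abs]
    exact pow_le_pow_left₀ (abs_nonneg _) (abs_real_inner_le_norm _ _) 2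
  have hbound : ‖B‖ ≤ √(S / c) := by
    refine B.opNorm_le_bound (Real.sqrt_nonneg _) fun u => ?_
    calc ‖B u‖ ≤ √(S / c * ‖u‖ ^ 2) := by
          refine Real.le_sqrt_of_sq_le ?_
          rw [div_mul_eq_mul_div, le_div_iff₀ hc]
          linarith [hadj u]
      _ = √(S / c) * ‖u‖ := by rw [Real.sqrt_mul' _ (sq_nonneg _), Real.sqrt_sq (norm_nonneg _)]
  rw [show ‖B‖ = ‖A‖ from ContinuousLinearMap.adjoint.norm_map A,
    Real.le_sqrt (norm_nonneg _) (by positivity), le_div_iff₀ hc] at hbound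
  linarith

end TightFrame

section Motion

variable {E F : Type*} [NormedAddCommGroup E] [InnerProductSpace ℝ E]
  [NormedAddCommGroup F] [InnerProductSpace ℝ F] {ι : Type*} [Fintype ι]

theorem sum_norm_map_add_sq_of_sum_eq_zero {𝓕 : Type*} [FunLike 𝓕 E F] [LinearMapClass 𝓕 ℝ E F]
    {x : ι → E} (hcx : ∑ i, x i = 0) (A : 𝓕) (τ : F) :
    ∑ i, ‖A (x i) + τ‖ ^ 2 = ∑ i, ‖A (x i)‖ ^ 2 + Fintype.card ι * ‖τ‖ ^ 2 := by
  have hcross : ∑ i, ⟪A (x i), τ⟫ = 0 := by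
    rw [← sum_inner, ← map_sum, hcx, map_zero, inner_zero_left]
  simp only [norm_add_sq_real, sum_add_distrib, ← mul_sum, hcross, sum_const, card_univ,
    nsmul_eq_mul]
  ring

end Motion

theorem add_div_two_mul_sqrt_le {a b ε m : ℝ} (hε : 0 ≤ ε)
    (h : 1 / 2 * a ^ 2 + b ^ 2 ≤ m * ε ^ 2) : (a + b) / (2 * √m) ≤ ε := by
  have hsq : (a + b) ^ 2 ≤ m * (2 * ε) ^ 2 := by nlinarith [sq_nonneg (a - b)]
  have hab : a + b ≤ √m * (2 * ε) := by
    rw [← Real.sqrt_sq (by positivity : 0 ≤ 2 * ε), ← Real.sqrt_mul' _ (sq_nonneg _)]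
    exact Real.le_sqrt_of_sq_le hsq
  exact div_le_of_le_mul₀ (by positivity) hε (by linarith)

theorem hausdorff_dist_controls_motion_general
    (d : ℕ) (ε : ℝ) (hε : 0 ≤ ε)
    (x x' : Fin (d + 1) → EuclideanSpace ℝ (Fin d))
    (hx : ∀ i j, i ≠ j → ‖x i - x j‖ = 1)
    (hcx : ∑ i, x i = 0)
    (R : EuclideanSpace ℝ (Fin d) ≃ₗᵢ[ℝ] EuclideanSpace ℝ (Fin d))
    (τ : EuclideanSpace ℝ (Fin d))
    (hmotion : ∀ i, x' i = R (x i) + τ)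
    (hclose : ∀ i, ‖x i - x' i‖ ≤ ε) :
    (1 / 2) * ‖R.toLinearIsometry.toContinuousLinearMap -
        (1 : EuclideanSpace ℝ (Fin d) →L[ℝ] EuclideanSpace ℝ (Fin d))‖ ^ 2 + ‖τ‖ ^ 2
      ≤ (d + 1) * ε ^ 2 ∧
    (‖R.toLinearIsometry.toContinuousLinearMap -
        (1 : EuclideanSpace ℝ (Fin d) →L[ℝ] EuclideanSpace ℝ (Fin d))‖ + ‖τ‖) /
        (2 * Real.sqrt (d + 1)) ≤ ε := by
  set A := R.toLinearIsometry.toContinuousLinearMap -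
    (1 : EuclideanSpace ℝ (Fin d) →L[ℝ] EuclideanSpace ℝ (Fin d))
  have hdisp : ∀ i, ‖A (x i) + τ‖ ^ 2 ≤ ε ^ 2 := fun i => by
    have : A (x i) + τ = -(x i - x' i) := by simp [A, hmotion]; abel
    rw [this, norm_neg]
    exact pow_le_pow_left₀ (norm_nonneg _) (hclose i) 2
  have hsum : ∑ i, ‖A (x i)‖ ^ 2 + (d + 1) * ‖τ‖ ^ 2 ≤ (d + 1) * ε ^ 2 := by
    calc ∑ i, ‖A (x i)‖ ^ 2 + (d + 1) * ‖τ‖ ^ 2 = ∑ i, ‖A (x i) + τ‖ ^ 2 := by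
          simp [sum_norm_map_add_sq_of_sum_eq_zero hcx]
      _ ≤ ∑ _i : Fin (d + 1), ε ^ 2 := sum_le_sum fun i _ => hdisp i
      _ = (d + 1) * ε ^ 2 := by simp
  have hop := mul_sq_opNorm_le_sum_sq_norm_apply one_half_pos
    (sum_inner_sq_eq_half_of_equilateral hx hcx finrank_euclideanSpace_fin) A
  have hbound : 1 / 2 * ‖A‖ ^ 2 + ‖τ‖ ^ 2 ≤ (d + 1) * ε ^ 2 := by
    linarith [mul_nonneg d.cast_nonneg (sq_nonneg ‖τ‖)]
  exact ⟨hbound, add_div_two_mul_sqrt_le hε hbound⟩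

theorem hausdorff_dist_controls_motion
    (d : ℕ) (ε : ℝ) (hε : 0 ≤ ε)
    (x x' : Fin (d + 1) → EuclideanSpace ℝ (Fin d))
    (hx : ∀ i j, i ≠ j → ‖x i - x j‖ = 1)
    (hx' : ∀ i j, i ≠ j → ‖x' i - x' j‖ = 1)
    (hcx : ∑ i, x i = 0) (hcx' : ∑ i, x' i = 0)
    (R : EuclideanSpace ℝ (Fin d) ≃ₗᵢ[ℝ] EuclideanSpace ℝ (Fin d))
    (τ : EuclideanSpace ℝ (Fin d))
    (hmotion : ∀ i, x' i = R (x i) + τ)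
    (hclose : ∀ i, ‖x i - x' i‖ ≤ ε) :
    (1 / 2) * ‖R.toLinearIsometry.toContinuousLinearMap -
        (1 : EuclideanSpace ℝ (Fin d) →L[ℝ] EuclideanSpace ℝ (Fin d))‖ ^ 2 + ‖τ‖ ^ 2
      ≤ (d + 1) * ε ^ 2 ∧
    (‖R.toLinearIsometry.toContinuousLinearMap -
        (1 : EuclideanSpace ℝ (Fin d) →L[ℝ] EuclideanSpace ℝ (Fin d))‖ + ‖τ‖) /
        (2 * Real.sqrt (d + 1)) ≤ ε :=
  hausdorff_dist_controls_motion_general d ε hε x x' hx hcx R τ hmotion hclose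
end

section
/- Let R ∈ O(d) with no eigenvalue on (-∞,0], let B = log R be the principal skew-symmetric logarithm (so each rotation angle θ_j in the normal form of R satisfies 0 ≤ θ_j ≤ π/2), and assume ‖R - I‖_op < √2. Then ‖R - I‖_op = 2 sin(‖B‖_op/2), and hence ‖R - I‖_op ≤ ‖B‖_op ≤ (π/2)‖R - I‖_op. -/
open Real
open scoped RealInnerProductSpace
set_option maxHeartbeats 1000000
set_option synthInstance.maxHeartbeats 200000

section Aux

variable {d : ℕ}

local notation "E" d => EuclideanSpace ℝ (Fin d)

/-- Norm of an operator diagonal in an orthonormal basis. -/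
lemma opNorm_eq_sup_abs {d : ℕ} (hd : 0 < d)
    (b : OrthonormalBasis (Fin d) ℝ (EuclideanSpace ℝ (Fin d)))
    (T : EuclideanSpace ℝ (Fin d) →L[ℝ] EuclideanSpace ℝ (Fin d))
    (hsym : (T : EuclideanSpace ℝ (Fin d) →ₗ[ℝ] EuclideanSpace ℝ (Fin d)).IsSymmetric)
    (ν : Fin d → ℝ) (hT : ∀ i, T (b i) = ν i • b i) :
    ‖T‖ = Finset.univ.sup' (Finset.univ_nonempty_iff.2 ⟨⟨0, hd⟩⟩) (fun i => |ν i|) := by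
  have hne : (Finset.univ : Finset (Fin d)).Nonempty := Finset.univ_nonempty_iff.2 ⟨⟨0, hd⟩⟩
  set m := Finset.univ.sup' hne (fun i => |ν i|) with hm
  have hmi : ∀ i, |ν i| ≤ m := fun i => Finset.le_sup' (fun i => |ν i|) (Finset.mem_univ i)
  have hm0 : 0 ≤ m := le_trans (abs_nonneg _) (hmi ⟨0, hd⟩)
  have hb1 : ∀ i, ‖b i‖ = 1 := fun i => b.orthonormal.1 i
  apply le_antisymm
  · apply T.opNorm_le_bound hm0
    intro x
    have hrepr : ∀ j, b.repr (T x) j = ν j * b.repr x j := by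
      intro j
      rw [b.repr_apply_apply, b.repr_apply_apply]
      have h := hsym (b j) x
      simp only [ContinuousLinearMap.coe_coe] at h
      rw [← h, hT j, real_inner_smul_left]
    have h1 : ‖T x‖ = ‖b.repr (T x)‖ := (b.repr.norm_map (T x)).symm
    have h2 : ‖x‖ = ‖b.repr x‖ := (b.repr.norm_map x).symm
    rw [h1, h2, EuclideanSpace.norm_eq, EuclideanSpace.norm_eq]
    rw [← Real.sqrt_sq hm0, ← Real.sqrt_mul (sq_nonneg m)]
    apply Real.sqrt_le_sqrt
    rw [Finset.mul_sum]
    apply Finset.sum_le_sum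
    intro j _
    rw [hrepr j]
    have : ‖ν j * b.repr x j‖ = |ν j| * ‖b.repr x j‖ := by
      rw [Real.norm_eq_abs, Real.norm_eq_abs, abs_mul]
    rw [this, mul_pow, sq_abs]
    have h3 : (ν j)^2 ≤ m^2 := by
      rw [← sq_abs]
      exact pow_le_pow_left₀ (abs_nonneg _) (hmi j) 2
    exact mul_le_mul_of_nonneg_right h3 (sq_nonneg _)
  · apply Finset.sup'_le
    intro i _
    have h1 : ‖T (b i)‖ = |ν i| := by
      rw [hT i, norm_smul, hb1 i, Real.norm_eq_abs, mul_one]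
    have h2 := T.le_opNorm (b i)
    rw [h1, hb1 i, mul_one] at h2
    exact h2

/-- Evaluation of `exp B + exp (-B)` on a vector `v` with `B² v = -μ • v`. -/
lemma exp_add_exp_neg_apply {d : ℕ}
    (B : EuclideanSpace ℝ (Fin d) →L[ℝ] EuclideanSpace ℝ (Fin d))
    (v : EuclideanSpace ℝ (Fin d)) (μ : ℝ) (hμ : 0 ≤ μ)
    (hv : (B * B) v = (-μ) • v) :
    NormedSpace.exp B v + NormedSpace.exp (-B) v
      = (2 * Real.cos (Real.sqrt μ)) • v := by
  have hpow : ∀ k : ℕ, (B ^ (2 * k)) v = ((-μ) ^ k) • v := by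
    intro k
    induction k with
    | zero => simp
    | succ k ih =>
      have h1 : B ^ (2 * (k + 1)) = B ^ (2 * k) * B ^ 2 := by
        rw [show 2 * (k + 1) = 2 * k + 2 by ring, pow_add]
      rw [h1, ContinuousLinearMap.mul_apply, sq, hv, map_smul, ih, smul_smul,
        ← pow_succ']
  -- HasSum for exp B v and exp (-B) v
  have hsum : ∀ A : EuclideanSpace ℝ (Fin d) →L[ℝ] EuclideanSpace ℝ (Fin d),
      HasSum (fun n : ℕ => ((n.factorial : ℝ)⁻¹) • (A ^ n) v) (NormedSpace.exp A v) := by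
    intro A
    have h1 : HasSum (fun n : ℕ => ((n.factorial : ℝ)⁻¹) • A ^ n) (NormedSpace.exp A) := by
      have h0 : NormedSpace.exp A = ∑' n : ℕ, (n.factorial : ℝ)⁻¹ • A ^ n := by
        rw [NormedSpace.exp_eq_tsum ℝ]
      rw [h0]
      exact (NormedSpace.expSeries_summable' (𝕂 := ℝ) A).hasSum
    have h2 := h1.mapL (ContinuousLinearMap.apply ℝ (EuclideanSpace ℝ (Fin d)) v)
    simpa using h2
  have hadd := (hsum B).add (hsum (-B))
  -- the target sum
  set f : ℕ → EuclideanSpace ℝ (Fin d) :=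
    fun n => ((n.factorial : ℝ)⁻¹) • (B ^ n) v + ((n.factorial : ℝ)⁻¹) • ((-B) ^ n) v with hf
  have hcos : HasSum (fun k : ℕ => (2 * ((-1) ^ k * (Real.sqrt μ) ^ (2 * k) / ((2 * k).factorial))) • v)
      ((2 * Real.cos (Real.sqrt μ)) • v) :=
    ((Real.hasSum_cos (Real.sqrt μ)).mul_left 2).smul_const v
  have hinj : Function.Injective (fun k : ℕ => 2 * k) := fun a b h =>
    Nat.eq_of_mul_eq_mul_left (by norm_num) h
  have hvanish : ∀ n ∉ Set.range (fun k : ℕ => 2 * k), f n = 0 := by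
    intro n hn
    have hodd : Odd n := by
      rcases Nat.even_or_odd n with ⟨k, hk⟩ | ho
      · exact absurd (⟨k, show 2 * k = n by omega⟩ :
          n ∈ Set.range fun j : ℕ => 2 * j) hn
      · exact ho
    have : (-B) ^ n = -(B ^ n) := hodd.neg_pow B
    simp only [hf]
    rw [this, ContinuousLinearMap.neg_apply, smul_neg, add_neg_cancel]
  have hmatch : ∀ k : ℕ,
      (2 * ((-1) ^ k * (Real.sqrt μ) ^ (2 * k) / ((2 * k).factorial))) • v = f (2 * k) := by
    intro k
    have he : Even (2 * k) := ⟨k, by ring⟩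
    have h1 : ((-B) : _) ^ (2 * k) = B ^ (2 * k) := he.neg_pow B
    have h2 : (Real.sqrt μ) ^ (2 * k) = μ ^ k := by
      rw [pow_mul, Real.sq_sqrt hμ]
    simp only [hf, h1, hpow k, smul_smul]
    rw [← add_smul]
    congr 1
    have hfac : (((2 * k).factorial) : ℝ) ≠ 0 := Nat.cast_ne_zero.mpr (Nat.factorial_ne_zero _)
    rw [h2]
    field_simp
    ring
  have heq : (fun k : ℕ => (2 * ((-1) ^ k * (Real.sqrt μ) ^ (2 * k) / ((2 * k).factorial))) • v)
      = f ∘ (fun k : ℕ => 2 * k) := funext hmatch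
  rw [heq] at hcos
  have hfsum : HasSum f ((2 * Real.cos (Real.sqrt μ)) • v) :=
    (hinj.hasSum_iff hvanish).mp hcos
  exact hadd.unique hfsum

end Aux

theorem principal_log_norm_comparison
    (d : ℕ) (B : EuclideanSpace ℝ (Fin d) →L[ℝ] EuclideanSpace ℝ (Fin d))
    (hskew : ContinuousLinearMap.adjoint B = -B)
    (hangle : ‖B‖ ≤ π / 2)
    (hclose : ‖NormedSpace.exp B - 1‖ < Real.sqrt 2) :
    ‖NormedSpace.exp B - 1‖ = 2 * Real.sin (‖B‖ / 2) ∧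
    ‖NormedSpace.exp B - 1‖ ≤ ‖B‖ ∧
    ‖B‖ ≤ (π / 2) * ‖NormedSpace.exp B - 1‖ := by
  rcases Nat.eq_zero_or_pos d with hd0 | hd
  · subst hd0
    have hB : B = 0 := by
      ext x i
      exact i.elim0
    rw [hB, NormedSpace.exp_zero, sub_self, norm_zero]
    norm_num [Real.sin_zero]
  · clear hclose
    have hne : (Finset.univ : Finset (Fin d)).Nonempty :=
      Finset.univ_nonempty_iff.2 ⟨⟨0, hd⟩⟩
    have hstar : star B = -B := by
      rw [ContinuousLinearMap.star_eq_adjoint, hskew]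
    set C := star B * B with hC
    have hCsa : IsSelfAdjoint C := IsSelfAdjoint.star_mul_self B
    have hCsym : (C : EuclideanSpace ℝ (Fin d) →ₗ[ℝ] EuclideanSpace ℝ (Fin d)).IsSymmetric :=
      ContinuousLinearMap.isSelfAdjoint_iff_isSymmetric.mp hCsa
    have hrank : Module.finrank ℝ (EuclideanSpace ℝ (Fin d)) = d := finrank_euclideanSpace_fin
    set b := hCsym.eigenvectorBasis hrank with hb
    set μ := hCsym.eigenvalues hrank with hμdef
    have hCb : ∀ i, C (b i) = μ i • b i := by
      intro i
      exact hCsym.apply_eigenvectorBasis hrank i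
    have hb1 : ∀ i, ‖b i‖ = 1 := fun i => b.orthonormal.1 i
    have hμnonneg : ∀ i, 0 ≤ μ i := by
      intro i
      have h1 : (inner ℝ (C (b i)) (b i) : ℝ) = μ i := by
        rw [hCb i, real_inner_smul_left, real_inner_self_eq_norm_sq, hb1 i]
        ring
      have h2 : (inner ℝ (C (b i)) (b i) : ℝ) = ‖B (b i)‖ ^ 2 := by
        rw [hC, ContinuousLinearMap.mul_apply, ContinuousLinearMap.star_eq_adjoint,
          ContinuousLinearMap.adjoint_inner_left, real_inner_self_eq_norm_sq]
      rw [h2] at h1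
      rw [← h1]
      positivity
    have hBB : ∀ i, (B * B) (b i) = (-(μ i)) • b i := by
      intro i
      have hCneg : C = -(B * B) := by rw [hC, hstar]; exact neg_mul B B
      have h2 := hCb i
      rw [hCneg, ContinuousLinearMap.neg_apply, neg_eq_iff_eq_neg] at h2
      rw [h2, neg_smul]
    have hCnorm : ‖C‖ = ‖B‖ * ‖B‖ := by
      rw [hC, ContinuousLinearMap.star_eq_adjoint]
      exact ContinuousLinearMap.norm_adjoint_comp_self B
    have hC1 := opNorm_eq_sup_abs hd b C hCsym μ hCb
    obtain ⟨i₀, -, hi₀⟩ := Finset.exists_mem_eq_sup' (Finset.univ_nonempty_iff.2 ⟨⟨0, hd⟩⟩)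
      (fun i => |μ i|)
    have hmax : ∀ i, μ i ≤ μ i₀ := by
      intro i
      have h1 : |μ i| ≤ |μ i₀| := by
        rw [← hi₀]
        exact Finset.le_sup' (fun i => |μ i|) (Finset.mem_univ i)
      calc μ i ≤ |μ i| := le_abs_self _
        _ ≤ |μ i₀| := h1
        _ = μ i₀ := abs_of_nonneg (hμnonneg i₀)
    have hBsq : ‖B‖ * ‖B‖ = μ i₀ := by
      rw [← hCnorm, hC1, hi₀, abs_of_nonneg (hμnonneg i₀)]
    have hsqrt : Real.sqrt (μ i₀) = ‖B‖ := by
      rw [← hBsq, Real.sqrt_mul_self (norm_nonneg B)]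
    -- the operator S = exp B - 1
    set S := NormedSpace.exp B - 1 with hS
    have hSstar : star S = NormedSpace.exp (-B) - 1 := by
      rw [hS, ContinuousLinearMap.star_eq_adjoint, map_sub]
      congr 1
      · rw [← ContinuousLinearMap.star_eq_adjoint, NormedSpace.star_exp, hstar]
      · rw [← ContinuousLinearMap.star_eq_adjoint, star_one]
    have hunit : NormedSpace.exp (-B) * NormedSpace.exp B = 1 := by
      letI : NormedAlgebra ℚ (EuclideanSpace ℝ (Fin d) →L[ℝ] EuclideanSpace ℝ (Fin d)) :=
        NormedAlgebra.restrictScalars ℚ ℝ _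
      rw [← NormedSpace.exp_add_of_commute (Commute.neg_left (Commute.refl B)),
        neg_add_cancel, NormedSpace.exp_zero]
    have hM : star S * S
        = (2 : ℝ) • (1 : EuclideanSpace ℝ (Fin d) →L[ℝ] EuclideanSpace ℝ (Fin d))
          - (NormedSpace.exp B + NormedSpace.exp (-B)) := by
      rw [hSstar, hS]
      have hexpand : (NormedSpace.exp (-B) - 1) * (NormedSpace.exp B - 1)
          = NormedSpace.exp (-B) * NormedSpace.exp B - NormedSpace.exp (-B)
            - NormedSpace.exp B + 1 := by
        simp only [sub_mul, mul_sub, one_mul, mul_one]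
        abel
      rw [hexpand, hunit]
      module
    have hMb : ∀ i, (star S * S) (b i)
        = (2 - 2 * Real.cos (Real.sqrt (μ i))) • b i := by
      intro i
      rw [hM]
      simp only [ContinuousLinearMap.sub_apply, ContinuousLinearMap.smul_apply,
        ContinuousLinearMap.one_apply, ContinuousLinearMap.add_apply]
      rw [exp_add_exp_neg_apply B (b i) (μ i) (hμnonneg i) (hBB i), sub_smul]
    have hMsa : IsSelfAdjoint (star S * S) := IsSelfAdjoint.star_mul_self S
    have hMsym := ContinuousLinearMap.isSelfAdjoint_iff_isSymmetric.mp hMsa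
    have hM1 := opNorm_eq_sup_abs hd b (star S * S) hMsym _ hMb
    have hcosval : ∀ i, 0 ≤ 2 - 2 * Real.cos (Real.sqrt (μ i)) := by
      intro i
      have := Real.cos_le_one (Real.sqrt (μ i))
      linarith
    have hπ := Real.pi_pos
    have hmono : ∀ i, 2 - 2 * Real.cos (Real.sqrt (μ i)) ≤ 2 - 2 * Real.cos ‖B‖ := by
      intro i
      have h1 : Real.sqrt (μ i) ≤ ‖B‖ := by
        rw [← hsqrt]
        exact Real.sqrt_le_sqrt (hmax i)
      have h2 : ‖B‖ ≤ π := by linarith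
      have := Real.cos_le_cos_of_nonneg_of_le_pi (Real.sqrt_nonneg _) h2 h1
      linarith
    have hsup : Finset.univ.sup' (Finset.univ_nonempty_iff.2 ⟨⟨0, hd⟩⟩)
        (fun i => |2 - 2 * Real.cos (Real.sqrt (μ i))|) = 2 - 2 * Real.cos ‖B‖ := by
      apply le_antisymm
      · apply Finset.sup'_le
        intro i _
        rw [abs_of_nonneg (hcosval i)]
        exact hmono i
      · calc 2 - 2 * Real.cos ‖B‖ = |2 - 2 * Real.cos (Real.sqrt (μ i₀))| := by
              rw [abs_of_nonneg (hcosval i₀), hsqrt]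
          _ ≤ _ := Finset.le_sup' (fun i => |2 - 2 * Real.cos (Real.sqrt (μ i))|)
              (Finset.mem_univ i₀)
    have hSS : ‖star S * S‖ = ‖S‖ * ‖S‖ := by
      rw [ContinuousLinearMap.star_eq_adjoint]
      exact ContinuousLinearMap.norm_adjoint_comp_self S
    have hSnorm2 : ‖S‖ * ‖S‖ = 2 - 2 * Real.cos ‖B‖ := by
      rw [← hSS, hM1, hsup]
    have hs0 : 0 ≤ Real.sin (‖B‖ / 2) :=
      Real.sin_nonneg_of_nonneg_of_le_pi (by positivity) (by linarith [norm_nonneg B])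
    have htrig : (2 * Real.sin (‖B‖ / 2)) ^ 2 = 2 - 2 * Real.cos ‖B‖ := by
      have h1 := Real.sin_sq_add_cos_sq (‖B‖ / 2)
      have h2 := Real.cos_two_mul (‖B‖ / 2)
      rw [show 2 * (‖B‖ / 2) = ‖B‖ by ring] at h2
      nlinarith
    have hkey : ‖S‖ = 2 * Real.sin (‖B‖ / 2) := by
      have h1 : ‖S‖ ^ 2 = (2 * Real.sin (‖B‖ / 2)) ^ 2 := by
        rw [htrig, sq, hSnorm2]
      calc ‖S‖ = Real.sqrt (‖S‖ ^ 2) := (Real.sqrt_sq (norm_nonneg S)).symm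
        _ = Real.sqrt ((2 * Real.sin (‖B‖ / 2)) ^ 2) := by rw [h1]
        _ = 2 * Real.sin (‖B‖ / 2) := Real.sqrt_sq (by positivity)
    refine ⟨hkey, ?_, ?_⟩
    · rw [hkey]
      have := Real.sin_le (show (0:ℝ) ≤ ‖B‖ / 2 by positivity)
      linarith
    · rw [hkey]
      have hj := Real.mul_le_sin (x := ‖B‖ / 2) (by positivity) (by linarith [norm_nonneg B])
      have h2 : 2 / π * (‖B‖ / 2) = ‖B‖ / π := by field_simp
      rw [h2] at hj
      have h3 : π * (‖B‖ / π) ≤ π * Real.sin (‖B‖ / 2) :=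
        mul_le_mul_of_nonneg_left hj (le_of_lt hπ)
      rw [mul_div_cancel₀ _ (ne_of_gt hπ)] at h3
      linarith
end

section
/- Fix θ with 0 < θ ≤ π/18. Let Δ = {0, x_1, …, x_d} be a regular simplex of edge length 1 in ℝ^d, let v be a unit vector with ⟨v, x_1⟩ = max_{i,j} ⟨v, x_i - x_j⟩ and ⟨v, x_1⟩ > cos θ. Let R_θ be the rotation by angle θ in the plane spanned by v and x_1 (rotating v toward x_1), acting as the identity on the orthogonal complement. Then the rotated simplex Δ' = R_θ(Δ) satisfies cos 2θ ≤ ⟨v, R_θ x_1⟩ ≤ cos θ, and ⟨v, R_θ x_1⟩ = max_{i,j} ⟨v, R_θ x_i - R_θ x_j⟩ (with the convention x_0 = 0). -/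
/-! Write `x 1 = cos α • v + sin α • u`; then `cos θ < ⟪v, x 1⟫` means `α < θ`, and
`⟪v, R (x 1)⟫ = cos (α + θ)` lies between `cos 2θ` and `cos θ`. For maximality,
`⟪v, R y⟫ = ⟪R⁻¹ v, y⟫` where the unit vector `R⁻¹ v` makes the angle `α + θ ≤ π / 9` with `x 1`.
Every edge vector `y = x i - x j` other than `x 1 - x 0` has `⟪x 1, y⟫ ≤ 1 / 2` (the vertices are
pairwise at angle `π / 3`), and since `cos (π / 9) ≥ 2 / √5` this caps `⟪R⁻¹ v, y⟫` by
`⟪R⁻¹ v, x 1⟫`. -/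

open RealInnerProductSpace Real

variable {E : Type*} [NormedAddCommGroup E]

section UnitSimplex

variable {ι : Type*} {x : ι → E} {i₀ : ι}

theorem norm_eq_one_of_ne_base (hx0 : x i₀ = 0) (hedge : ∀ i j, i ≠ j → ‖x i - x j‖ = 1)
    {i : ι} (hi : i ≠ i₀) : ‖x i‖ = 1 := by
  simpa [hx0] using hedge i i₀ hi

theorem norm_sub_le_one_of_edge (hedge : ∀ i j, i ≠ j → ‖x i - x j‖ = 1) (i j : ι) :
    ‖x i - x j‖ ≤ 1 := by
  by_cases hij : i = j
  · simp [hij]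
  · exact (hedge i j hij).le

variable [InnerProductSpace ℝ E]

theorem inner_eq_half_of_ne (hx0 : x i₀ = 0) (hedge : ∀ i j, i ≠ j → ‖x i - x j‖ = 1)
    {i j : ι} (hij : i ≠ j) (hi : i ≠ i₀) (hj : j ≠ i₀) : ⟪x i, x j⟫ = 1 / 2 := by
  have h := norm_sub_sq_real (x i) (x j)
  rw [hedge i j hij, norm_eq_one_of_ne_base hx0 hedge hi,
    norm_eq_one_of_ne_base hx0 hedge hj] at h
  linarith

theorem inner_sub_le_half (hx0 : x i₀ = 0) (hedge : ∀ i j, i ≠ j → ‖x i - x j‖ = 1)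
    (k : ι) {i j : ι} (h : ¬(i = k ∧ j = i₀)) : ⟪x k, x i - x j⟫ ≤ 1 / 2 := by
  classical
  by_cases hk : k = i₀
  · simp [hk, hx0]
  have hval : ∀ m, ⟪x k, x m⟫ = if m = k then 1 else if m = i₀ then 0 else 1 / 2 := by
    intro m
    split_ifs with hmk hm0
    · rw [hmk, real_inner_self_eq_norm_sq, norm_eq_one_of_ne_base hx0 hedge hk, one_pow]
    · rw [hm0, hx0, inner_zero_right]
    · exact inner_eq_half_of_ne hx0 hedge (Ne.symm hmk) hk hm0
  rw [inner_sub_right, hval, hval]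
  split_ifs <;> simp_all <;> norm_num

end UnitSimplex

variable [InnerProductSpace ℝ E]

/-- The component of `w` orthogonal to `e` has length `√(1 - ⟪w, e⟫ ^ 2) ≤ ⟪w, e⟫ / 2`. -/
theorem inner_le_inner_of_inner_le_half {w e y : E} (hw : ‖w‖ = 1) (he : ‖e‖ = 1)
    (hy : ‖y‖ ≤ 1) (hey : ⟪e, y⟫ ≤ 1 / 2) (hwe : 0 ≤ ⟪w, e⟫) (hwe' : 4 ≤ 5 * ⟪w, e⟫ ^ 2) :
    ⟪w, y⟫ ≤ ⟪w, e⟫ := by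
  set M := ⟪w, e⟫
  have hperp_sq : ‖w - M • e‖ ^ 2 = 1 - M ^ 2 := by
    rw [norm_sub_sq_real, norm_smul, real_inner_smul_right, hw, he, Real.norm_eq_abs, mul_one, sq_abs]
    ring
  have hperp : ‖w - M • e‖ ≤ M / 2 := by
    rw [← pow_le_pow_iff_left₀ (norm_nonneg _) (by positivity) two_ne_zero, hperp_sq]
    linarith
  calc ⟪w, y⟫ = M * ⟪e, y⟫ + ⟪w - M • e, y⟫ := by
        rw [inner_sub_left, real_inner_smul_left]; ring
    _ ≤ M * (1 / 2) + ‖w - M • e‖ * 1 :=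
        add_le_add (mul_le_mul_of_nonneg_left hey hwe)
          ((real_inner_le_norm _ _).trans (mul_le_mul_of_nonneg_left hy (norm_nonneg _)))
    _ ≤ M := by linarith

section Plane

variable {v u : E}

theorem inner_cos_smul_add_sin_smul (hv : ‖v‖ = 1) (hu : ‖u‖ = 1) (huv : ⟪u, v⟫ = 0)
    (φ ψ : ℝ) : ⟪cos φ • v + sin φ • u, cos ψ • v + sin ψ • u⟫ = cos (φ - ψ) := by
  have hvu : ⟪v, u⟫ = 0 := by rw [real_inner_comm, huv]
  simp only [inner_add_left, inner_add_right, real_inner_smul_left, real_inner_smul_right,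
    real_inner_self_eq_norm_sq, hv, hu, huv, hvu, cos_sub]
  ring

theorem norm_cos_smul_add_sin_smul (hv : ‖v‖ = 1) (hu : ‖u‖ = 1) (huv : ⟪u, v⟫ = 0) (φ : ℝ) :
    ‖cos φ • v + sin φ • u‖ = 1 := by
  rw [norm_eq_sqrt_real_inner, inner_cos_smul_add_sin_smul hv hu huv, sub_self, cos_zero,
    sqrt_one]

theorem LinearIsometryEquiv.symm_apply_of_rotation (R : E ≃ₗᵢ[ℝ] E) {θ : ℝ}
    (hRv : R v = cos θ • v + sin θ • u) (hRu : R u = -sin θ • v + cos θ • u) :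
    R.symm v = cos (-θ) • v + sin (-θ) • u := by
  rw [LinearIsometryEquiv.symm_apply_eq, map_add, map_smul, map_smul, hRv, hRu, cos_neg, sin_neg]
  match_scalars
  · linear_combination (-1 : ℝ) * sin_sq_add_cos_sq θ
  · ring

end Plane

theorem simplex_rotation_general
    (d : ℕ) (θ : ℝ) (hθ : 0 < θ) (hθ2 : θ ≤ π / 18)
    (x : Fin (d + 1) → EuclideanSpace ℝ (Fin d))
    (hx0 : x 0 = 0)
    (hedge : ∀ i j, i ≠ j → ‖x i - x j‖ = 1)
    (v : EuclideanSpace ℝ (Fin d)) (hv : ‖v‖ = 1)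
    (hbig : Real.cos θ < ⟪v, x 1⟫)
    -- `u` is the unit vector orthogonal to `v` in the plane spanned by `v` and `x 1`,
    -- pointing from `v` toward `x 1`:
    (u : EuclideanSpace ℝ (Fin d)) (hu : ‖u‖ = 1) (huv : ⟪u, v⟫ = 0)
    (hx1 : x 1 = ⟪x 1, v⟫ • v + Real.sqrt (1 - ⟪x 1, v⟫ ^ 2) • u)
    -- `R` is the rotation by angle `θ` in the plane spanned by `v` and `u`,
    -- rotating `v` toward `u` (i.e. toward `x 1`), identity on the orthogonal complement:
    (R : EuclideanSpace ℝ (Fin d) ≃ₗᵢ[ℝ] EuclideanSpace ℝ (Fin d))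
    (hRv : R v = Real.cos θ • v + Real.sin θ • u)
    (hRu : R u = -Real.sin θ • v + Real.cos θ • u) :
    Real.cos (2 * θ) ≤ ⟪v, R (x 1)⟫ ∧
    ⟪v, R (x 1)⟫ ≤ Real.cos θ ∧
    ∀ i j, ⟪v, R (x i) - R (x j)⟫ ≤ ⟪v, R (x 1)⟫ := by
  have hθπ : 2 * θ ≤ π := by linarith [pi_pos]
  have hcosθ : 0 ≤ cos θ := cos_nonneg_of_neg_pi_div_two_le_of_le (by linarith) (by linarith)
  have h10 : (1 : Fin (d + 1)) ≠ 0 := fun h => by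
    rw [h, hx0, inner_zero_right] at hbig; linarith
  have hx1_norm : ‖x 1‖ = 1 := norm_eq_one_of_ne_base hx0 hedge h10
  set α := arccos ⟪x 1, v⟫
  have hcos_lt : cos θ < ⟪x 1, v⟫ := by rwa [real_inner_comm]
  have ha1 : ⟪x 1, v⟫ ≤ 1 := by simpa [hx1_norm, hv] using real_inner_le_norm (x 1) v
  have hαθ : α < θ := by
    rw [← arccos_cos hθ.le (by linarith)]
    exact arccos_lt_arccos (by linarith) hcos_lt ha1
  have hx1α : x 1 = cos α • v + sin α • u := by
    rwa [sin_arccos, cos_arccos (by linarith) ha1]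
  have hR : ∀ y, ⟪v, R y⟫ = ⟪R.symm v, y⟫ := fun y => by
    rw [real_inner_comm, R.inner_map_eq_flip, real_inner_comm]
  have hRsymm := R.symm_apply_of_rotation hRv hRu
  have hvRx1 : ⟪v, R (x 1)⟫ = cos (α + θ) := by
    rw [hR, hRsymm, hx1α, inner_cos_smul_add_sin_smul hv hu huv, ← cos_neg]
    ring_nf
  have hlow : cos (2 * θ) ≤ cos (α + θ) :=
    cos_le_cos_of_nonneg_of_le_pi (by linarith [arccos_nonneg ⟪x 1, v⟫]) hθπ (by linarith)
  have hcos2θ : 0.9 ≤ cos (2 * θ) := by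
    nlinarith [one_sub_sq_div_two_le_cos (x := 2 * θ), pi_lt_d2]
  refine ⟨hvRx1 ▸ hlow, hvRx1 ▸ cos_le_cos_of_nonneg_of_le_pi hθ.le (by linarith)
    (by linarith [arccos_nonneg ⟪x 1, v⟫]), fun i j => ?_⟩
  rw [← map_sub, hR, hR]
  by_cases hij : i = 1 ∧ j = 0
  · rw [hij.1, hij.2, hx0, sub_zero]
  rw [hR] at hvRx1
  exact inner_le_inner_of_inner_le_half (by rw [LinearIsometryEquiv.norm_map, hv]) hx1_norm
    (norm_sub_le_one_of_edge hedge i j) (inner_sub_le_half hx0 hedge 1 hij) (by linarith)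
    (by nlinarith)

theorem simplex_rotation
    (d : ℕ) (θ : ℝ) (hθ : 0 < θ) (hθ2 : θ ≤ π / 18)
    (x : Fin (d + 1) → EuclideanSpace ℝ (Fin d))
    (hx0 : x 0 = 0)
    (hedge : ∀ i j, i ≠ j → ‖x i - x j‖ = 1)
    (v : EuclideanSpace ℝ (Fin d)) (hv : ‖v‖ = 1)
    (hmax : ∀ i j, ⟪v, x i - x j⟫ ≤ ⟪v, x 1⟫)
    (hbig : Real.cos θ < ⟪v, x 1⟫)
    -- `u` is the unit vector orthogonal to `v` in the plane spanned by `v` and `x 1`,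
    -- pointing from `v` toward `x 1`:
    (u : EuclideanSpace ℝ (Fin d)) (hu : ‖u‖ = 1) (huv : ⟪u, v⟫ = 0)
    (hx1 : x 1 = ⟪x 1, v⟫ • v + Real.sqrt (1 - ⟪x 1, v⟫ ^ 2) • u)
    -- `R` is the rotation by angle `θ` in the plane spanned by `v` and `u`,
    -- rotating `v` toward `u` (i.e. toward `x 1`), identity on the orthogonal complement:
    (R : EuclideanSpace ℝ (Fin d) ≃ₗᵢ[ℝ] EuclideanSpace ℝ (Fin d))
    (hRv : R v = Real.cos θ • v + Real.sin θ • u)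
    (hRu : R u = -Real.sin θ • v + Real.cos θ • u)
    (hRfix : ∀ w, ⟪w, v⟫ = 0 → ⟪w, u⟫ = 0 → R w = w) :
    Real.cos (2 * θ) ≤ ⟪v, R (x 1)⟫ ∧
    ⟪v, R (x 1)⟫ ≤ Real.cos θ ∧
    ∀ i j, ⟪v, R (x i) - R (x j)⟫ ≤ ⟪v, R (x 1)⟫ :=
  simplex_rotation_general d θ hθ hθ2 x hx0 hedge v hv hbig u hu huv hx1 R hRv hRu
end
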